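/- arXiv:2005.09719 — 5 statements merged into one kernel-verified Lean document; each statement's English description precedes it below -/
import Mathlib

section
/- Let Γ be a finite simple graph with no cycles (a forest), let H be a finite nonempty partially ordered set, and let σ : H → V(Γ) be a map such that: (a) whenever x ⋖ x′ is a covering relation in H, the vertices σ(x) and σ(x′) are adjacent in Γ; and (b) whenever σ(x) = σ(x′) or σ(x) and σ(x′) are adjacent in Γ, the elements x and x′ are comparable in H. Then there exists x ∈ H with 1/3 ≤ di(x;H) ≤ 2/3. (This is the combinatorial content of the paper's Theorem on fully commutative intervals: applied to the heap H_w of a nonidentity fully commutative element w of a Coxeter group with acyclic Coxeter diagram, with its labeling by simple generators, it yields b([id,w]_L) = bi(H_w) ≥ 1/3.) -/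
/-- `di(x;H)`: the fraction of order ideals (lower sets) of the poset `H` that contain
the element `x`. -/
noncomputable def di (H : Type*) [PartialOrder H] (x : H) : ℝ :=
  (Nat.card {I : Set H // IsLowerSet I ∧ x ∈ I} : ℝ) /
    (Nat.card {I : Set H // IsLowerSet I} : ℝ)


open Classical in
noncomputable def stmt0NN (H : Type*) [PartialOrder H] : ℕ :=
  Nat.card {I : Set H // IsLowerSet I}

open Classical in
noncomputable def stmt0ff (H : Type*) [PartialOrder H] (x : H) : ℕ :=
  Nat.card {I : Set H // IsLowerSet I ∧ x ∈ I}

section aux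
variable {H : Type*} [PartialOrder H] [Fintype H]

lemma stmt0_card_split {α : Type*} [Finite α] (p q : α → Prop) :
    Nat.card {x // p x} = Nat.card {x // p x ∧ q x} + Nat.card {x // p x ∧ ¬ q x} := by
  classical
  rw [← Nat.card_sum]
  exact Nat.card_congr
    (((Equiv.sumCompl fun s : {x // p x} => q s.1).symm).trans
      (Equiv.sumCongr (Equiv.subtypeSubtypeEquivSubtypeInter p q)
        (Equiv.subtypeSubtypeEquivSubtypeInter p fun x => ¬ q x)))

lemma stmt0_card_le_of_imp {α : Type*} [Finite α] {p q : α → Prop} (h : ∀ x, p x → q x) :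
    Nat.card {x // p x} ≤ Nat.card {x // q x} :=
  Nat.card_le_card_of_injective (fun s => ⟨s.1, h s.1 s.2⟩) (by
    intro s t hst
    have h2 := congrArg Subtype.val hst
    exact Subtype.ext h2)

lemma stmt0NN_pos : 0 < stmt0NN H :=
  have : Nonempty {I : Set H // IsLowerSet I} := ⟨⟨∅, isLowerSet_empty⟩⟩
  Nat.card_pos

lemma stmt0NN_split (x : H) :
    stmt0NN H = stmt0ff H x + Nat.card {I : Set H // IsLowerSet I ∧ x ∉ I} :=
  stmt0_card_split (fun I : Set H => IsLowerSet I) (fun I => x ∈ I)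

lemma stmt0ff_split (x y : H) :
    stmt0ff H x = Nat.card {I : Set H // IsLowerSet I ∧ (x ∈ I ∧ y ∈ I)}
      + Nat.card {I : Set H // IsLowerSet I ∧ (x ∈ I ∧ y ∉ I)} := by
  have h := stmt0_card_split (fun I : Set H => IsLowerSet I ∧ x ∈ I) (fun I => y ∈ I)
  rw [stmt0ff]
  rw [h]
  congr 1
  · exact Nat.card_congr (Equiv.subtypeEquivRight fun _ => by tauto)
  · exact Nat.card_congr (Equiv.subtypeEquivRight fun _ => by tauto)

lemma stmt0ff_mono {a b : H} (h : a ≤ b) : stmt0ff H b ≤ stmt0ff H a :=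
  stmt0_card_le_of_imp (fun I hI => ⟨hI.1, hI.1 h hI.2⟩)

lemma stmt0ff_pair_le (a b : H) :
    Nat.card {I : Set H // IsLowerSet I ∧ (a ∈ I ∧ b ∈ I)} ≤ stmt0ff H b :=
  stmt0_card_le_of_imp (fun I hI => ⟨hI.1, hI.2.2⟩)

lemma stmt0_exists_covBy_up {x z : H} (h : x < z) : ∃ c, x ⋖ c ∧ c ≤ z := by
  classical
  obtain ⟨c, hc, hmin⟩ := (Finset.exists_minimal (s := Finset.univ.filter fun w => x < w ∧ w ≤ z) ⟨z, by simp [h]⟩).imp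
    (q := fun c => c ∈ Finset.univ.filter (fun w => x < w ∧ w ≤ z) ∧
      ∀ w ∈ Finset.univ.filter (fun w => x < w ∧ w ≤ z), ¬ w < c)
    fun c hc => ⟨hc.1, fun w hw hlt => lt_irrefl _ (hlt.trans_le (hc.2 hw hlt.le))⟩
  simp only [Finset.mem_filter, Finset.mem_univ, true_and] at hc hmin
  exact ⟨c, ⟨hc.1, fun w hxw hwc => hmin w ⟨hxw, hwc.le.trans hc.2⟩ hwc⟩, hc.2⟩

lemma stmt0_exists_covBy_down {x z : H} (h : x < z) : ∃ c, x ≤ c ∧ c ⋖ z := by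
  classical
  obtain ⟨c, hc, hmax⟩ := (Finset.exists_maximal (s := Finset.univ.filter fun w => x ≤ w ∧ w < z) ⟨x, by simp [h, h.le]⟩).imp
    (q := fun c => c ∈ Finset.univ.filter (fun w => x ≤ w ∧ w < z) ∧
      ∀ w ∈ Finset.univ.filter (fun w => x ≤ w ∧ w < z), ¬ c < w)
    fun c hc => ⟨hc.1, fun w hw hlt => lt_irrefl _ (hlt.trans_le (hc.2 hw hlt.le))⟩
  simp only [Finset.mem_filter, Finset.mem_univ, true_and] at hc hmax
  exact ⟨c, hc.1, hc.2, fun w hcw hwz => hmax w ⟨hc.1.trans hcw.le, hwz⟩ hcw⟩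

lemma stmt0_diff_inj {I J : Set H} {m : H} (hI : m ∈ I) (hJ : m ∈ J)
    (h : I \ {m} = J \ {m}) : I = J := by
  ext z
  by_cases hz : z = m
  · subst hz; exact iff_of_true hI hJ
  · constructor
    · intro hzI
      have : z ∈ J \ {m} := h ▸ (⟨hzI, by simp [hz]⟩ : z ∈ I \ {m})
      exact this.1
    · intro hzJ
      have : z ∈ I \ {m} := h.symm ▸ (⟨hzJ, by simp [hz]⟩ : z ∈ J \ {m})
      exact this.1

lemma stmt0_insert_inj {I J : Set H} {m : H} (hI : m ∉ I) (hJ : m ∉ J)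
    (h : insert m I = insert m J) : I = J := by
  ext z
  by_cases hz : z = m
  · subst hz; exact iff_of_false hI hJ
  · constructor
    · intro hzI
      have : z ∈ insert m J := h ▸ (Set.mem_insert_iff.mpr (Or.inr hzI))
      rcases Set.mem_insert_iff.mp this with h' | h'
      · exact absurd h' hz
      · exact h'
    · intro hzJ
      have : z ∈ insert m I := h.symm ▸ (Set.mem_insert_iff.mpr (Or.inr hzJ))
      rcases Set.mem_insert_iff.mp this with h' | h'
      · exact absurd h' hz
      · exact h'

lemma stmt0_max2 {m : H} (hm : ∀ z, ¬ m < z) : 2 * stmt0ff H m ≤ stmt0NN H := by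
  classical
  have key : ∀ s : {I : Set H // IsLowerSet I ∧ m ∈ I},
      IsLowerSet (s.1 \ {m}) ∧ m ∉ s.1 \ {m} := by
    intro s
    refine ⟨?_, by simp⟩
    intro p q hqp hp
    refine ⟨s.2.1 hqp hp.1, ?_⟩
    intro hq
    rw [Set.mem_singleton_iff] at hq
    subst hq
    exact hm p (lt_of_le_of_ne hqp (fun h => hp.2 (Set.mem_singleton_iff.mpr h.symm)))
  have hinj : stmt0ff H m ≤ Nat.card {I : Set H // IsLowerSet I ∧ m ∉ I} := by
    apply Nat.card_le_card_of_injective (fun s => ⟨s.1 \ {m}, key s⟩)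
    intro s t hst
    have h2 := congrArg Subtype.val hst
    simp only at h2
    exact Subtype.ext (stmt0_diff_inj s.2.2 t.2.2 h2)
  rw [stmt0NN_split m]
  omega

lemma stmt0_min2 {m : H} (hm : ∀ z, ¬ z < m) : stmt0NN H ≤ 2 * stmt0ff H m := by
  classical
  have key : ∀ s : {I : Set H // IsLowerSet I ∧ m ∉ I},
      IsLowerSet (insert m s.1) ∧ m ∈ insert m s.1 := by
    intro s
    refine ⟨?_, Set.mem_insert _ _⟩
    intro p q hqp hp
    rcases Set.mem_insert_iff.mp hp with h' | h'
    · have hqm : q ≤ m := le_trans hqp (le_of_eq h')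
      rcases hqm.lt_or_eq with h'' | h''
      · exact absurd h'' (hm q)
      · rw [h'']; exact Set.mem_insert _ _
    · exact Set.mem_insert_iff.mpr (Or.inr (s.2.1 hqp h'))
  have hinj : Nat.card {I : Set H // IsLowerSet I ∧ m ∉ I} ≤ stmt0ff H m := by
    apply Nat.card_le_card_of_injective (fun s => ⟨insert m s.1, key s⟩)
    intro s t hst
    have h2 := congrArg Subtype.val hst
    simp only at h2
    exact Subtype.ext (stmt0_insert_inj s.2.2 t.2.2 h2)
  rw [stmt0NN_split m]
  omega

lemma stmt0_L1 {a b : H} (huniq : ∀ z, a ⋖ z → z = b) :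
    2 * stmt0ff H a ≤ stmt0NN H + stmt0ff H b := by
  classical
  have key : ∀ s : {I : Set H // IsLowerSet I ∧ (a ∈ I ∧ b ∉ I)},
      IsLowerSet (s.1 \ {a}) ∧ a ∉ s.1 \ {a} := by
    intro s
    refine ⟨?_, by simp⟩
    intro p q hqp hp
    refine ⟨s.2.1 hqp hp.1, ?_⟩
    intro hq
    rw [Set.mem_singleton_iff] at hq
    subst hq
    have hap : q < p := lt_of_le_of_ne hqp (fun h => hp.2 (Set.mem_singleton_iff.mpr h.symm))
    obtain ⟨c, hc, hcp⟩ := stmt0_exists_covBy_up hap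
    rw [huniq c hc] at hcp
    exact s.2.2.2 (s.2.1 hcp hp.1)
  have hinj : Nat.card {I : Set H // IsLowerSet I ∧ (a ∈ I ∧ b ∉ I)}
      ≤ Nat.card {I : Set H // IsLowerSet I ∧ a ∉ I} := by
    apply Nat.card_le_card_of_injective (fun s => ⟨s.1 \ {a}, key s⟩)
    intro s t hst
    have h2 := congrArg Subtype.val hst
    simp only at h2
    exact Subtype.ext (stmt0_diff_inj s.2.2.1 t.2.2.1 h2)
  have h1 := stmt0ff_split a b
  have h2 := stmt0ff_pair_le a b
  have h3 := stmt0NN_split a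
  omega

lemma stmt0_L2 {a b : H} (huniq : ∀ z, z ⋖ b → z = a) :
    stmt0ff H a ≤ 2 * stmt0ff H b := by
  classical
  have key : ∀ s : {I : Set H // IsLowerSet I ∧ (a ∈ I ∧ b ∉ I)},
      IsLowerSet (insert b s.1) ∧ b ∈ insert b s.1 := by
    intro s
    refine ⟨?_, Set.mem_insert _ _⟩
    intro p q hqp hp
    rcases Set.mem_insert_iff.mp hp with h' | h'
    · have hqb : q ≤ b := le_trans hqp (le_of_eq h')
      rcases hqb.lt_or_eq with h'' | h''
      · obtain ⟨c, hqc, hcb⟩ := stmt0_exists_covBy_down h''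
        rw [huniq c hcb] at hqc
        exact Set.mem_insert_iff.mpr (Or.inr (s.2.1 hqc s.2.2.1))
      · rw [h'']; exact Set.mem_insert _ _
    · exact Set.mem_insert_iff.mpr (Or.inr (s.2.1 hqp h'))
  have hinj : Nat.card {I : Set H // IsLowerSet I ∧ (a ∈ I ∧ b ∉ I)} ≤ stmt0ff H b := by
    apply Nat.card_le_card_of_injective (fun s => ⟨insert b s.1, key s⟩)
    intro s t hst
    have h2 := congrArg Subtype.val hst
    simp only at h2
    exact Subtype.ext (stmt0_insert_inj s.2.2.2 t.2.2.2 h2)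
  have h1 := stmt0ff_split a b
  have h2 := stmt0ff_pair_le a b
  omega

end aux

section graph
open SimpleGraph

lemma stmt0_no_reach {V : Type*} {Γ : SimpleGraph V} (hΓ : Γ.IsAcyclic) {x u : V}
    (hxu : Γ.Adj x u) : ¬ (Γ.deleteEdges {s(x,u)}).Reachable x u := by
  classical
  rintro ⟨w⟩
  let p := w.toPath
  have hp : (p : (Γ.deleteEdges {s(x,u)}).Walk x u).IsPath := p.2
  have hedges : ∀ e ∈ (p : (Γ.deleteEdges {s(x,u)}).Walk x u).edges, e ∈ Γ.edgeSet := by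
    intro e he
    have h1 := Walk.edges_subset_edgeSet _ he
    rw [SimpleGraph.edgeSet_deleteEdges] at h1
    exact h1.1
  have hnotmem : s(x,u) ∉ (p : (Γ.deleteEdges {s(x,u)}).Walk x u).edges := by
    intro he
    have h1 := Walk.edges_subset_edgeSet _ he
    rw [SimpleGraph.edgeSet_deleteEdges] at h1
    exact h1.2 rfl
  let q : Γ.Walk x u := Walk.transfer _ Γ hedges
  have hq : q.IsPath := by
    rw [Walk.isPath_def]
    show ((p : (Γ.deleteEdges {s(x,u)}).Walk x u).transfer Γ hedges).support.Nodup
    rw [Walk.support_transfer]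
    exact (Walk.isPath_def _).mp hp
  have hqe : s(x,u) ∉ q.edges := by
    show s(x,u) ∉ ((p : (Γ.deleteEdges {s(x,u)}).Walk x u).transfer Γ hedges).edges
    rw [Walk.edges_transfer]
    exact hnotmem
  have huniqp := (SimpleGraph.isAcyclic_iff_path_unique.mp hΓ) ⟨q, hq⟩ (Path.singleton hxu)
  apply hqe
  have hval : q = (Path.singleton hxu : Γ.Walk x u) := congrArg Subtype.val huniqp
  rw [hval]
  exact Path.mk'_mem_edges_singleton hxu

lemma stmt0_S_lt {V : Type*} [Fintype V] {Γ : SimpleGraph V} (hΓ : Γ.IsAcyclic) {u v m : V}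
    (huv : Γ.Adj u v) (hmu : Γ.Adj m u) (hmv : m ≠ v) :
    ({y | (Γ.deleteEdges {s(m,u)}).Reachable m y}).ncard
      < ({y | (Γ.deleteEdges {s(u,v)}).Reachable u y}).ncard := by
  classical
  apply Set.ncard_lt_ncard ?_ (Set.toFinite _)
  have husub : u ∉ {y | (Γ.deleteEdges {s(m,u)}).Reachable m y} := by
    intro hcon
    exact stmt0_no_reach hΓ hmu hcon
  have hsub : {y | (Γ.deleteEdges {s(m,u)}).Reachable m y}
      ⊆ {y | (Γ.deleteEdges {s(u,v)}).Reachable u y} := by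
    intro y hy
    obtain ⟨w⟩ := hy
    let p := w.toPath
    have hup : u ∉ (p : (Γ.deleteEdges {s(m,u)}).Walk m y).support := by
      intro hmem
      exact stmt0_no_reach hΓ hmu ⟨(p : (Γ.deleteEdges {s(m,u)}).Walk m y).takeUntil u hmem⟩
    have hedges : ∀ e ∈ (p : (Γ.deleteEdges {s(m,u)}).Walk m y).edges,
        e ∈ (Γ.deleteEdges {s(u,v)}).edgeSet := by
      intro e he
      have h1 := Walk.edges_subset_edgeSet _ he
      rw [SimpleGraph.edgeSet_deleteEdges] at h1
      rw [SimpleGraph.edgeSet_deleteEdges]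
      refine ⟨h1.1, ?_⟩
      intro he2
      rw [Set.mem_singleton_iff] at he2
      subst he2
      exact hup (Walk.fst_mem_support_of_mem_edges _ he)
    have hadj2 : (Γ.deleteEdges {s(u,v)}).Adj u m := by
      rw [SimpleGraph.deleteEdges_adj]
      refine ⟨hmu.symm, ?_⟩
      intro hmem
      rw [Set.mem_singleton_iff, Sym2.eq_iff] at hmem
      rcases hmem with ⟨-, h2⟩ | ⟨h1, -⟩
      · exact hmv h2
      · exact Γ.irrefl (h1 ▸ huv)
    exact ⟨Walk.cons hadj2 ((p : (Γ.deleteEdges {s(m,u)}).Walk m y).transfer _ hedges)⟩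
  rw [Set.ssubset_def]
  refine ⟨hsub, fun hcon => husub (hcon ?_)⟩
  exact Reachable.refl u
end graph

/-- Let `Γ` be a finite simple graph with no cycles (a forest), `H` a
finite nonempty poset and `σ : H → V(Γ)` a map such that: (a) whenever `x ⋖ x'` in `H`,
the vertices `σ x` and `σ x'` are adjacent in `Γ`; and (b) whenever `σ x = σ x'` or
`σ x` and `σ x'` are adjacent in `Γ`, the elements `x` and `x'` are comparable in `H`.
Then there exists `x ∈ H` with `1/3 ≤ di(x;H) ≤ 2/3`. -/
theorem stmt0 {V H : Type*} [Fintype V] (Γ : SimpleGraph V) (hΓ : Γ.IsAcyclic)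
    [PartialOrder H] [Fintype H] [Nonempty H] (σ : H → V)
    (ha : ∀ x x' : H, x ⋖ x' → Γ.Adj (σ x) (σ x'))
    (hb : ∀ x x' : H, σ x = σ x' ∨ Γ.Adj (σ x) (σ x') → x ≤ x' ∨ x' ≤ x) :
    ∃ x : H, 1 / 3 ≤ di H x ∧ di H x ≤ 2 / 3 := by
  classical
  by_contra hcon
  push_neg at hcon
  have hdi : ∀ x : H, di H x = (stmt0ff H x : ℝ) / (stmt0NN H : ℝ) := fun _ => rfl
  have hNpos : 0 < stmt0NN H := stmt0NN_pos
  have hAB : ∀ x : H, (3 * stmt0ff H x < stmt0NN H) ∨ (2 * stmt0NN H < 3 * stmt0ff H x) := by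
    intro x
    have hNr : (0:ℝ) < (stmt0NN H : ℝ) := by exact_mod_cast hNpos
    rcases lt_or_ge (di H x) (1/3) with h | h
    · left
      rw [hdi x, div_lt_div_iff₀ hNr (by norm_num : (0:ℝ) < 3)] at h
      have h2 : ((3 * stmt0ff H x : ℕ) : ℝ) < ((stmt0NN H : ℕ) : ℝ) := by push_cast; linarith
      exact_mod_cast h2
    · right
      have h2 := hcon x h
      rw [hdi x, div_lt_div_iff₀ (by norm_num : (0:ℝ) < 3) hNr] at h2
      have h3 : ((2 * stmt0NN H : ℕ) : ℝ) < ((3 * stmt0ff H x : ℕ) : ℝ) := by push_cast; linarith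
      exact_mod_cast h3
  have hAnotmax : ∀ x : H, 2 * stmt0NN H < 3 * stmt0ff H x → ∃ c, x ⋖ c := by
    intro x hx
    by_cases hex : ∃ z, x < z
    · obtain ⟨z, hz⟩ := hex
      obtain ⟨c, hc, -⟩ := stmt0_exists_covBy_up hz
      exact ⟨c, hc⟩
    · push_neg at hex
      have h2 := stmt0_max2 (fun z => hex z)
      omega
  have hBnotmin : ∀ x : H, 3 * stmt0ff H x < stmt0NN H → ∃ c, c ⋖ x := by
    intro x hx
    by_cases hex : ∃ z, z < x
    · obtain ⟨z, hz⟩ := hex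
      obtain ⟨c, -, hc⟩ := stmt0_exists_covBy_down hz
      exact ⟨c, hc⟩
    · push_neg at hex
      have h2 := stmt0_min2 (fun z => hex z)
      omega
  have hL1 : ∀ a b : H, (∀ z, a ⋖ z → z = b) →
      2 * stmt0NN H < 3 * stmt0ff H a → 3 * stmt0ff H b < stmt0NN H → False := by
    intro a b hu h1 h2
    have h3 := stmt0_L1 hu
    omega
  have hL2 : ∀ a b : H, (∀ z, z ⋖ b → z = a) →
      2 * stmt0NN H < 3 * stmt0ff H a → 3 * stmt0ff H b < stmt0NN H → False := by
    intro a b hu h1 h2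
    have h3 := stmt0_L2 hu
    omega
  have hcov2up : ∀ a b w : H, a ⋖ b → a ⋖ w → w ≠ b → ¬(w ≤ b ∨ b ≤ w) := by
    intro a b w hab haw hwb hcomp
    rcases hcomp with h | h
    · exact hab.2 haw.lt (lt_of_le_of_ne h hwb)
    · exact haw.2 hab.lt (lt_of_le_of_ne h (fun hh => hwb hh.symm))
  have hcov2down : ∀ a b z : H, a ⋖ b → z ⋖ b → z ≠ a → ¬(z ≤ a ∨ a ≤ z) := by
    intro a b z hab hzb hza hcomp
    rcases hcomp with h | h
    · exact hzb.2 (lt_of_le_of_ne h hza) hab.lt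
    · exact hab.2 (lt_of_le_of_ne h (fun hh => hza hh.symm)) hzb.lt
  have wfG : WellFounded ((· > ·) : H → H → Prop) := (inferInstance : WellFoundedGT H).wf
  have wfL : WellFounded ((· < ·) : H → H → Prop) := (inferInstance : WellFoundedLT H).wf
  have master : ∀ (n : ℕ) (u v : V), Γ.Adj u v →
      ({y | (Γ.deleteEdges {s(u,v)}).Reachable u y}).ncard ≤ n →
      ((¬ ∃ a b : H, a ⋖ b ∧ (2 * stmt0NN H < 3 * stmt0ff H a) ∧
          (3 * stmt0ff H b < stmt0NN H) ∧ σ a = u ∧ σ b = v) ∧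
       (¬ ∃ a b : H, a ⋖ b ∧ (2 * stmt0NN H < 3 * stmt0ff H a) ∧
          (3 * stmt0ff H b < stmt0NN H) ∧ σ a = v ∧ σ b = u) ∧
       (∀ a w : H, 2 * stmt0NN H < 3 * stmt0ff H a → σ a = v → a ⋖ w → σ w = u →
          2 * stmt0NN H < 3 * stmt0ff H w →
          ∃ ω, (2 * stmt0NN H < 3 * stmt0ff H ω) ∧ σ ω = v ∧ a < ω) ∧
       (∀ b z : H, 3 * stmt0ff H b < stmt0NN H → σ b = v → z ⋖ b → σ z = u →
          3 * stmt0ff H z < stmt0NN H →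
          ∃ ζ, (3 * stmt0ff H ζ < stmt0NN H) ∧ σ ζ = v ∧ ζ < b)) := by
    intro n
    induction n with
    | zero =>
      intro u v huv hle
      exfalso
      have h1 : u ∈ {y | (Γ.deleteEdges {s(u,v)}).Reachable u y} := SimpleGraph.Reachable.refl u
      have h2 : 0 < ({y | (Γ.deleteEdges {s(u,v)}).Reachable u y}).ncard :=
        (Set.ncard_pos (Set.toFinite _)).mpr ⟨u, h1⟩
      omega
    | succ n IH =>
      intro u v huv hcard
      have child := fun (m : V) (hmu : Γ.Adj m u) (hmv : m ≠ v) =>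
        IH m u hmu (by have := stmt0_S_lt hΓ huv hmu hmv; omega)
      have hi1 : ¬ ∃ a b : H, a ⋖ b ∧ (2 * stmt0NN H < 3 * stmt0ff H a) ∧
          (3 * stmt0ff H b < stmt0NN H) ∧ σ a = u ∧ σ b = v := by
        rintro ⟨a, b, hab, haA, hbB, hσa, hσb⟩
        by_cases huq : ∀ z, a ⋖ z → z = b
        · exact hL1 a b huq haA hbB
        push_neg at huq
        obtain ⟨w, haw, hwb⟩ := huq
        have hwbn : ¬(w ≤ b ∨ b ≤ w) := hcov2up a b w hab haw hwb
        have hσwb : σ w ≠ σ b := fun h => hwbn (hb w b (Or.inl h))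
        have hmu : Γ.Adj (σ w) u := by rw [← hσa]; exact (ha a w haw).symm
        have hmv : σ w ≠ v := by rw [← hσb]; exact hσwb
        have hP := child (σ w) hmu hmv
        have hwA : 2 * stmt0NN H < 3 * stmt0ff H w := by
          rcases hAB w with h | h
          · exact absurd ⟨a, w, haw, haA, h, hσa, rfl⟩ hP.2.1
          · exact h
        obtain ⟨ω, hωA, hσω, haω⟩ := hP.2.2.1 a w haA hσa haw rfl hwA
        have hcomp : ω ≤ b ∨ b ≤ ω := hb ω b (Or.inr (by rw [hσω, hσb]; exact huv))
        rcases hcomp with h | h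
        · have hne : ω ≠ b := by
            intro hh
            rw [hh] at hωA
            omega
          exact hab.2 haω (lt_of_le_of_ne h hne)
        · have h2 := stmt0ff_mono h
          omega
      have hi2 : ¬ ∃ a b : H, a ⋖ b ∧ (2 * stmt0NN H < 3 * stmt0ff H a) ∧
          (3 * stmt0ff H b < stmt0NN H) ∧ σ a = v ∧ σ b = u := by
        rintro ⟨a, b, hab, haA, hbB, hσa, hσb⟩
        by_cases huq : ∀ z, z ⋖ b → z = a
        · exact hL2 a b huq haA hbB
        push_neg at huq
        obtain ⟨z, hzb, hza⟩ := huq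
        have hzan : ¬(z ≤ a ∨ a ≤ z) := hcov2down a b z hab hzb hza
        have hσza : σ z ≠ σ a := fun h => hzan (hb z a (Or.inl h))
        have hmu : Γ.Adj (σ z) u := by rw [← hσb]; exact ha z b hzb
        have hmv : σ z ≠ v := by rw [← hσa]; exact hσza
        have hP := child (σ z) hmu hmv
        have hzB : 3 * stmt0ff H z < stmt0NN H := by
          rcases hAB z with h | h
          · exact h
          · exact absurd ⟨z, b, hzb, h, hbB, rfl, hσb⟩ hP.1
        obtain ⟨ζ, hζB, hσζ, hζb⟩ := hP.2.2.2 b z hbB hσb hzb rfl hzB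
        have hcomp : ζ ≤ a ∨ a ≤ ζ := hb ζ a (Or.inr (by rw [hσζ, hσa]; exact huv))
        rcases hcomp with h | h
        · have h2 := stmt0ff_mono h
          omega
        · have hne : a ≠ ζ := by
            intro hh
            rw [← hh] at hζB
            omega
          exact hab.2 (lt_of_le_of_ne h hne) hζb
      have hii : ∀ a w : H, 2 * stmt0NN H < 3 * stmt0ff H a → σ a = v → a ⋖ w → σ w = u →
          2 * stmt0NN H < 3 * stmt0ff H w →
          ∃ ω, (2 * stmt0NN H < 3 * stmt0ff H ω) ∧ σ ω = v ∧ a < ω := by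
        intro a w haA hσa haw hσw hwA
        have ascend : ∀ α : H, 2 * stmt0NN H < 3 * stmt0ff H α → σ α = u → a < α →
            ∃ ω, (2 * stmt0NN H < 3 * stmt0ff H ω) ∧ σ ω = v ∧ a < ω := by
          intro α
          refine wfG.induction (C := fun α => 2 * stmt0NN H < 3 * stmt0ff H α → σ α = u →
            a < α → ∃ ω, (2 * stmt0NN H < 3 * stmt0ff H ω) ∧ σ ω = v ∧ a < ω) α ?_
          intro x IHx hxA hσx hax
          obtain ⟨β, hxβ⟩ := hAnotmax x hxA
          by_cases hβv : σ β = v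
          · have hβA : 2 * stmt0NN H < 3 * stmt0ff H β := by
              rcases hAB β with h | h
              · exact absurd ⟨x, β, hxβ, hxA, h, hσx, hβv⟩ hi1
              · exact h
            exact ⟨β, hβA, hβv, lt_trans hax hxβ.lt⟩
          · have hmu : Γ.Adj (σ β) u := by rw [← hσx]; exact (ha x β hxβ).symm
            have hPx := child (σ β) hmu hβv
            have hβA : 2 * stmt0NN H < 3 * stmt0ff H β := by
              rcases hAB β with h | h
              · exact absurd ⟨x, β, hxβ, hxA, h, hσx, rfl⟩ hPx.2.1
              · exact h
            obtain ⟨γ, hγA, hσγ, hxγ⟩ := hPx.2.2.1 x β hxA hσx hxβ rfl hβA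
            exact IHx γ hxγ hγA hσγ (lt_trans hax hxγ)
        exact ascend w hwA hσw haw.lt
      have hii' : ∀ b z : H, 3 * stmt0ff H b < stmt0NN H → σ b = v → z ⋖ b → σ z = u →
          3 * stmt0ff H z < stmt0NN H →
          ∃ ζ, (3 * stmt0ff H ζ < stmt0NN H) ∧ σ ζ = v ∧ ζ < b := by
        intro b z hbB hσb hzb hσz hzB
        have descend : ∀ β : H, 3 * stmt0ff H β < stmt0NN H → σ β = u → β < b →
            ∃ ζ, (3 * stmt0ff H ζ < stmt0NN H) ∧ σ ζ = v ∧ ζ < b := by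
          intro β
          refine wfL.induction (C := fun β => 3 * stmt0ff H β < stmt0NN H → σ β = u →
            β < b → ∃ ζ, (3 * stmt0ff H ζ < stmt0NN H) ∧ σ ζ = v ∧ ζ < b) β ?_
          intro x IHx hxB hσx hxb
          obtain ⟨ζ0, hζ0x⟩ := hBnotmin x hxB
          by_cases hζv : σ ζ0 = v
          · have hζB : 3 * stmt0ff H ζ0 < stmt0NN H := by
              rcases hAB ζ0 with h | h
              · exact h
              · exact absurd ⟨ζ0, x, hζ0x, h, hxB, hζv, hσx⟩ hi2
            exact ⟨ζ0, hζB, hζv, lt_trans hζ0x.lt hxb⟩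
          · have hmu : Γ.Adj (σ ζ0) u := by rw [← hσx]; exact ha ζ0 x hζ0x
            have hPx := child (σ ζ0) hmu hζv
            have hζB : 3 * stmt0ff H ζ0 < stmt0NN H := by
              rcases hAB ζ0 with h | h
              · exact h
              · exact absurd ⟨ζ0, x, hζ0x, h, hxB, rfl, hσx⟩ hPx.1
            obtain ⟨ζ', hζ'B, hσζ', hζ'x⟩ := hPx.2.2.2 x ζ0 hxB hσx hζ0x rfl hζB
            exact IHx ζ' hζ'x hζ'B hσζ' (lt_trans hζ'x hxb)
        exact descend z hzB hσz hzb.lt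
      exact ⟨hi1, hi2, hii, hii'⟩
  obtain ⟨m0⟩ := (inferInstance : Nonempty H)
  obtain ⟨m, -, hmmin⟩ := (Finset.exists_minimal (s := (Finset.univ : Finset H)) ⟨m0, Finset.mem_univ m0⟩).imp
    (q := fun c => c ∈ (Finset.univ : Finset H) ∧ ∀ w ∈ (Finset.univ : Finset H), ¬ w < c)
    fun c hc => ⟨hc.1, fun w hw hlt => lt_irrefl _ (hlt.trans_le (hc.2 hw hlt.le))⟩
  have hmA : 2 * stmt0NN H < 3 * stmt0ff H m := by
    rcases hAB m with h | h
    · have h2 := stmt0_min2 (fun z => hmmin z (Finset.mem_univ z))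
      omega
    · exact h
  obtain ⟨a, haf, hamax⟩ := (Finset.exists_maximal
    (s := Finset.univ.filter fun x : H => 2 * stmt0NN H < 3 * stmt0ff H x)
    ⟨m, by simp [hmA]⟩).imp
    (q := fun c => c ∈ Finset.univ.filter (fun x : H => 2 * stmt0NN H < 3 * stmt0ff H x) ∧
      ∀ w ∈ Finset.univ.filter (fun x : H => 2 * stmt0NN H < 3 * stmt0ff H x), ¬ c < w)
    fun c hc => ⟨hc.1, fun w hw hlt => lt_irrefl _ (hlt.trans_le (hc.2 hw hlt.le))⟩
  simp only [Finset.mem_filter, Finset.mem_univ, true_and] at haf hamax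
  obtain ⟨c, hac⟩ := hAnotmax a haf
  have hcB : 3 * stmt0ff H c < stmt0NN H := by
    rcases hAB c with h | h
    · exact h
    · exact absurd hac.lt (hamax c (by simp [h]))
  exact (master (({y | (Γ.deleteEdges {s(σ a, σ c)}).Reachable (σ a) y}).ncard)
    (σ a) (σ c) (ha a c hac) le_rfl).1 ⟨a, c, hac, haf, hcB, rfl, rfl⟩
end

section
/- Let A ⊆ Φ⁺ be an order ideal of the root poset, let w ∈ W^A = {u ∈ W : I(u) ⊆ A}, and let α ∈ A satisfy wα ∈ −Φ⁺. Then ws_α ∈ W^A and α ∉ I(ws_α). Consequently, with C = W^A, the map w ↦ ws_α is an injection from C_α into C ∖ C_α. -/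
open InnerProductSpace

noncomputable section

variable {E : Type*} [NormedAddCommGroup E] [InnerProductSpace ℝ E]

/-- The reflection across the hyperplane orthogonal to `α`:
`s_α(x) = x − (2⟨α,x⟩/⟨α,α⟩)α`. -/
def sRefl (α x : E) : E := x - (2 * ⟪α, x⟫_ℝ / ⟪α, α⟫_ℝ) • α

/-- `Φ` is a finite crystallographic (reduced) root system spanning `E`. -/
def IsRootSystem (Φ : Set E) : Prop :=
  Φ.Finite ∧ (0 : E) ∉ Φ ∧ Submodule.span ℝ Φ = ⊤ ∧
    (∀ α ∈ Φ, ∀ β ∈ Φ, sRefl α β ∈ Φ) ∧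
    (∀ α ∈ Φ, ∀ β ∈ Φ, ∃ n : ℤ, 2 * ⟪α, β⟫_ℝ / ⟪α, α⟫_ℝ = (n : ℝ)) ∧
    (∀ α ∈ Φ, ∀ t : ℝ, t • α ∈ Φ → t = 1 ∨ t = -1)

/-- `b` is a base of the root system `Φ`: a basis of `E` consisting of roots such that
every root is a linear combination of the base whose coefficients are either all
nonnegative integers or all nonpositive integers. -/
def IsBase (Φ : Set E) {r : ℕ} (b : Module.Basis (Fin r) ℝ E) : Prop :=
  (∀ i, b i ∈ Φ) ∧
    ∀ α ∈ Φ, (∀ i, ∃ k : ℕ, b.repr α i = (k : ℝ)) ∨ (∀ i, ∃ k : ℕ, b.repr α i = -(k : ℝ))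

/-- The positive roots with respect to the base `b`. -/
def posRoots (Φ : Set E) {r : ℕ} (b : Module.Basis (Fin r) ℝ E) : Set E :=
  {α ∈ Φ | ∀ i, 0 ≤ b.repr α i}

/-- The root poset order: `α ≤ β` iff `β − α` is a nonnegative combination of simple roots. -/
def rootLE {r : ℕ} (b : Module.Basis (Fin r) ℝ E) (α β : E) : Prop :=
  ∀ i, 0 ≤ b.repr (β - α) i

/-- `A` is an order ideal of the root poset. -/
def IsRootIdeal (Φ : Set E) {r : ℕ} (b : Module.Basis (Fin r) ℝ E) (A : Set E) : Prop :=
  A ⊆ posRoots Φ b ∧ ∀ α ∈ posRoots Φ b, ∀ β ∈ A, rootLE b α β → α ∈ A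

/-- The Weyl group of `Φ`: the subgroup of linear automorphisms of `E` generated by the
reflections `s_α`, `α ∈ Φ`. -/
def weylGroup (Φ : Set E) : Subgroup (E ≃ₗ[ℝ] E) :=
  Subgroup.closure {g | ∃ α ∈ Φ, ∀ x, g x = sRefl α x}

/-- The inversion set `I(w) = {α ∈ Φ⁺ : wα ∈ −Φ⁺}`. -/
def invSet (Φ : Set E) {r : ℕ} (b : Module.Basis (Fin r) ℝ E) (w : E ≃ₗ[ℝ] E) : Set E :=
  {α ∈ posRoots Φ b | -(w α) ∈ posRoots Φ b}

/-- The convex subset `W_D^A = {w ∈ W : D ⊆ I(w) ⊆ A}` of the Weyl group. -/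
def convexSubset (Φ : Set E) {r : ℕ} (b : Module.Basis (Fin r) ℝ E) (D A : Set E) :
    Set (E ≃ₗ[ℝ] E) :=
  {w | w ∈ weylGroup Φ ∧ D ⊆ invSet Φ b w ∧ invSet Φ b w ⊆ A}

/-- `δ_C(α) = |C_α|/|C|` where `C_α = {w ∈ C : wα ∈ −Φ⁺}`. -/
def delta (Φ : Set E) {r : ℕ} (b : Module.Basis (Fin r) ℝ E) (C : Set (E ≃ₗ[ℝ] E)) (α : E) : ℝ :=
  ({w ∈ C | -(w α) ∈ posRoots Φ b}.ncard : ℝ) / (C.ncard : ℝ)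

end

section Aux

variable {E : Type*} [NormedAddCommGroup E] [InnerProductSpace ℝ E]

lemma sRefl_self {α : E} (hα : α ≠ 0) : sRefl α α = -α := by
  have h : ⟪α, α⟫_ℝ ≠ 0 := inner_self_ne_zero.mpr hα
  rw [sRefl]
  rw [show 2 * ⟪α, α⟫_ℝ / ⟪α, α⟫_ℝ = 2 by field_simp]
  module

lemma sRefl_invol {α : E} (hα : α ≠ 0) (x : E) : sRefl α (sRefl α x) = x := by
  have h : ⟪α, α⟫_ℝ ≠ 0 := inner_self_ne_zero.mpr hα
  rw [sRefl, sRefl, inner_sub_right, real_inner_smul_right]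
  rw [show 2 * (⟪α, x⟫_ℝ - 2 * ⟪α, x⟫_ℝ / ⟪α, α⟫_ℝ * ⟪α, α⟫_ℝ) / ⟪α, α⟫_ℝ
      = -(2 * ⟪α, x⟫_ℝ / ⟪α, α⟫_ℝ) by field_simp; ring]
  module

lemma weyl_mapsTo {Φ : Set E} (hΦ : IsRootSystem Φ) {w : E ≃ₗ[ℝ] E} (hw : w ∈ weylGroup Φ) :
    ∀ x ∈ Φ, w x ∈ Φ := by
  obtain ⟨_, h0, _, hrefl, _⟩ := hΦ
  have key : ∀ g : E ≃ₗ[ℝ] E, g ∈ weylGroup Φ →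
      (∀ x ∈ Φ, g x ∈ Φ) ∧ (∀ x ∈ Φ, g⁻¹ x ∈ Φ) := by
    intro g hg
    induction hg using Subgroup.closure_induction with
    | mem g hg =>
      obtain ⟨β, hβ, hgβ⟩ := hg
      have hβ0 : β ≠ 0 := fun h => h0 (h ▸ hβ)
      have h1 : ∀ x ∈ Φ, g x ∈ Φ := fun x hx => (hgβ x) ▸ hrefl β hβ x hx
      refine ⟨h1, fun x hx => ?_⟩
      have hgg : g (g x) = x := by rw [hgβ, hgβ, sRefl_invol hβ0]
      have h2 : g⁻¹ x = g x := by
        have h3 : g⁻¹ (g (g x)) = g x := by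
          show g.symm (g (g x)) = g x
          exact g.symm_apply_apply (g x)
        rwa [hgg] at h3
      rw [h2]; exact h1 x hx
    | one => exact ⟨fun x hx => hx, fun x hx => by simpa using hx⟩
    | mul a c _ _ ha hc =>
      refine ⟨fun x hx => ?_, fun x hx => ?_⟩
      · show a (c x) ∈ Φ
        exact ha.1 _ (hc.1 x hx)
      · show c⁻¹ (a⁻¹ x) ∈ Φ
        exact hc.2 _ (ha.2 x hx)
    | inv a _ ha => exact ⟨ha.2, by simpa using ha.1⟩
  exact (key w hw).1

end Aux

/-- Let `A ⊆ Φ⁺` be an order ideal of the root poset, let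
`w ∈ W^A = {u ∈ W : I(u) ⊆ A}`, and let `α ∈ A` satisfy `wα ∈ −Φ⁺`.  Then `ws_α ∈ W^A` and
`α ∉ I(ws_α)`.  Consequently, with `C = W^A`, the map `w ↦ ws_α` is an injection from
`C_α` into `C ∖ C_α`. -/
theorem stmt5 {E : Type*} [NormedAddCommGroup E] [InnerProductSpace ℝ E]
    (Φ : Set E) (hΦ : IsRootSystem Φ) {r : ℕ} (b : Module.Basis (Fin r) ℝ E) (hb : IsBase Φ b)
    (A : Set E) (hA : IsRootIdeal Φ b A) (α : E) (hα : α ∈ A)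
    (s : E ≃ₗ[ℝ] E) (hs : ∀ x, s x = sRefl α x) :
    (∀ w ∈ convexSubset Φ b ∅ A, -(w α) ∈ posRoots Φ b →
        w * s ∈ convexSubset Φ b ∅ A ∧ α ∉ invSet Φ b (w * s)) ∧
      Set.InjOn (fun w => w * s)
        {w ∈ convexSubset Φ b ∅ A | -(w α) ∈ posRoots Φ b} ∧
      (fun w => w * s) '' {w ∈ convexSubset Φ b ∅ A | -(w α) ∈ posRoots Φ b} ⊆
        convexSubset Φ b ∅ A \ {w ∈ convexSubset Φ b ∅ A | -(w α) ∈ posRoots Φ b} := by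
  obtain ⟨hfin, h0, hspan, hrefl, hcrys, hred⟩ := hΦ
  have hApos : A ⊆ posRoots Φ b := hA.1
  have hαpos : α ∈ posRoots Φ b := hApos hα
  have hαΦ : α ∈ Φ := hαpos.1
  have hα0 : α ≠ 0 := fun h => h0 (h ▸ hαΦ)
  have hsα : s α = -α := by rw [hs, sRefl_self hα0]
  have hsW : s ∈ weylGroup Φ := Subgroup.subset_closure ⟨α, hαΦ, hs⟩
  -- a root is nonzero
  have hne : ∀ x ∈ Φ, x ≠ 0 := fun x hx h => h0 (h ▸ hx)
  -- negation of a root is a root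
  have hneg : ∀ x ∈ Φ, -x ∈ Φ := by
    intro x hx
    have := hrefl x hx x hx
    rwa [sRefl_self (hne x hx)] at this
  -- x and -x both have nonneg coords → x = 0
  have hposneg : ∀ x : E, (∀ i, 0 ≤ b.repr x i) → (∀ i, 0 ≤ b.repr (-x) i) → x = 0 := by
    intro x h1 h2
    have : b.repr x = 0 := by
      ext i
      have h2' : 0 ≤ -(b.repr x i) := by simpa using h2 i
      have h1' := h1 i
      simp only [Finsupp.coe_zero, Pi.zero_apply]
      linarith
    simpa using congrArg b.repr.symm this
  -- main claim
  have main : ∀ w ∈ convexSubset Φ b ∅ A, -(w α) ∈ posRoots Φ b →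
      w * s ∈ convexSubset Φ b ∅ A ∧ α ∉ invSet Φ b (w * s) := by
    intro w hw hwα
    obtain ⟨hwW, -, hwA⟩ := hw
    have hwsα : (w * s) α = -(w α) := by
      show w (s α) = -(w α)
      rw [hsα, map_neg]
    have hα_not : α ∉ invSet Φ b (w * s) := by
      rintro ⟨-, hneg'⟩
      rw [hwsα, neg_neg] at hneg'
      have : w α = 0 := hposneg _ hneg'.2 hwα.2
      exact hne _ (weyl_mapsTo ⟨hfin, h0, hspan, hrefl, hcrys, hred⟩ hwW α hαΦ) this
    refine ⟨⟨mul_mem hwW hsW, by simp, ?_⟩, hα_not⟩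
    -- I(w s) ⊆ A
    rintro β ⟨hβpos, hwsβ⟩
    have hβΦ : β ∈ Φ := hβpos.1
    set k : ℝ := 2 * ⟪α, β⟫_ℝ / ⟪α, α⟫_ℝ with hk
    have hsβ : s β = β - k • α := hs β
    have hγΦ : s β ∈ Φ := (hs β) ▸ hrefl α hαΦ β hβΦ
    have hwsβ' : -(w (s β)) ∈ posRoots Φ b := hwsβ
    rcases le_or_gt 0 k with hk0 | hk0
    · -- k ≥ 0 : w β = w (s β) + k • w α has nonpositive coords, so β ∈ I(w) ⊆ A
      have hwβ : w β = w (s β) + k • (w α) := by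
        rw [hsβ, map_sub, map_smul]; module
      have hcoord : ∀ i, 0 ≤ b.repr (-(w β)) i := by
        intro i
        have h1 := hwsβ'.2 i
        have h2 := hwα.2 i
        have : -(w β) = -(w (s β)) + k • (-(w α)) := by rw [hwβ]; module
        rw [this, map_add, map_smul]
        simp only [Finsupp.add_apply, Finsupp.smul_apply, smul_eq_mul]
        positivity
      have hwβΦ : w β ∈ Φ := weyl_mapsTo ⟨hfin, h0, hspan, hrefl, hcrys, hred⟩ hwW β hβΦ
      exact hwA ⟨hβpos, ⟨hneg _ hwβΦ, hcoord⟩⟩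
    · -- k < 0 : γ = s β ∈ Φ⁺, γ ∈ I(w) ⊆ A, and β ≤ γ
      have hγpos : s β ∈ posRoots Φ b := by
        refine ⟨hγΦ, fun i => ?_⟩
        rw [hsβ, map_sub, map_smul]
        simp only [Finsupp.sub_apply, Finsupp.smul_apply, smul_eq_mul]
        have h1 := hβpos.2 i
        have h2 := hαpos.2 i
        nlinarith
      have hγA : s β ∈ A := hwA ⟨hγpos, hwsβ'⟩
      refine hA.2 β hβpos (s β) hγA ?_
      intro i
      rw [hsβ]
      have : β - k • α - β = (-k) • α := by module
      rw [this, map_smul]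
      simp only [Finsupp.smul_apply, smul_eq_mul]
      have h2 := hαpos.2 i
      nlinarith
  refine ⟨main, ?_, ?_⟩
  · intro u _ v _ h
    simpa using mul_right_cancel (a := u) (b := s) (c := v) h
  · rintro x ⟨w, ⟨hwC, hwα⟩, rfl⟩
    have := main w hwC hwα
    refine ⟨this.1, ?_⟩
    rintro ⟨-, hws⟩
    have hwsα : (w * s) α = -(w α) := by
      show w (s α) = -(w α)
      rw [hsα, map_neg]
    rw [hwsα, neg_neg] at hws
    have : w α = 0 := hposneg _ hws.2 hwα.2
    obtain ⟨hwW, -, -⟩ := hwC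
    exact hne _ (weyl_mapsTo ⟨hfin, h0, hspan, hrefl, hcrys, hred⟩ hwW α hαΦ) this
end

section
/- Let J ⊆ Φ⁺ be a nonempty order ideal of the root poset. Then there exists a simple root α_i ∈ J ∩ Δ such that one cannot find two distinct roots β₁ ≠ β₂ ∈ J with s_{α_i}β₁ ∈ Φ⁺ ∖ J and s_{α_i}β₂ ∈ Φ⁺ ∖ J. -/
open InnerProductSpace

noncomputable section StmtSixAux
variable {E : Type*} [NormedAddCommGroup E] [InnerProductSpace ℝ E]

lemma inner_sRefl' (α x : E) (h : ⟪α, α⟫_ℝ ≠ 0) :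
    ⟪α, sRefl α x⟫_ℝ = -⟪α, x⟫_ℝ := by
  simp only [sRefl, inner_sub_right, real_inner_smul_right]
  field_simp
  ring

lemma sRefl_sRefl' (α x : E) (h : ⟪α, α⟫_ℝ ≠ 0) : sRefl α (sRefl α x) = x := by
  have h1 : ⟪α, sRefl α x⟫_ℝ = -⟪α, x⟫_ℝ := inner_sRefl' α x h
  show sRefl α x - (2 * ⟪α, sRefl α x⟫_ℝ / ⟪α, α⟫_ℝ) • α = x
  rw [h1]
  show (x - (2 * ⟪α, x⟫_ℝ / ⟪α, α⟫_ℝ) • α) - (2 * -⟪α, x⟫_ℝ / ⟪α, α⟫_ℝ) • α = x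
  have h2 : (2 : ℝ) * -⟪α, x⟫_ℝ / ⟪α, α⟫_ℝ = -(2 * ⟪α, x⟫_ℝ / ⟪α, α⟫_ℝ) := by ring
  rw [h2, neg_smul, sub_neg_eq_add, sub_add_cancel]

lemma repr_sRefl {r : ℕ} (b : Module.Basis (Fin r) ℝ E) (i : Fin r) (x : E) (j : Fin r) :
    b.repr (sRefl (b i) x) j
      = b.repr x j - (2 * ⟪b i, x⟫_ℝ / ⟪b i, b i⟫_ℝ) * (if i = j then 1 else 0) := by
  simp [sRefl, Finsupp.single_apply]

lemma pos_inner_self' (x : E) (hx : x ≠ 0) : 0 < ⟪x, x⟫_ℝ :=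
  lt_of_le_of_ne real_inner_self_nonneg (Ne.symm (inner_self_ne_zero.2 hx))

lemma sRefl_mem_pos {Φ : Set E} (hΦ : IsRootSystem Φ) {r : ℕ} {b : Module.Basis (Fin r) ℝ E}
    (hb : IsBase Φ b) {i : Fin r} {x : E} (hx : x ∈ posRoots Φ b) (hxi : x ≠ b i) :
    sRefl (b i) x ∈ posRoots Φ b := by
  have hΦmem : sRefl (b i) x ∈ Φ := hΦ.2.2.2.1 (b i) (hb.1 i) x hx.1
  rcases hb.2 _ hΦmem with hpos | hneg
  · refine ⟨hΦmem, fun j => ?_⟩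
    rcases hpos j with ⟨k, hk⟩; rw [hk]; positivity
  · exfalso
    have hzero : ∀ j, j ≠ i → b.repr x j = 0 := by
      intro j hj
      have h1 : b.repr (sRefl (b i) x) j = b.repr x j := by
        rw [repr_sRefl]; simp [Ne.symm hj]
      rcases hneg j with ⟨k, hk⟩
      have h2 : b.repr x j ≤ 0 := by
        rw [← h1, hk]; simp
      exact le_antisymm h2 (hx.2 j)
    have hx_eq : x = (b.repr x i) • b i := by
      have heq : b.repr x = b.repr ((b.repr x i) • b i) := by
        ext j
        rw [map_smul, Finsupp.smul_apply, Module.Basis.repr_self, Finsupp.single_apply, smul_eq_mul]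
        by_cases hj : i = j
        · subst hj; simp
        · simp [hj, hzero j (fun h => hj h.symm)]
      exact b.repr.injective heq
    have hmul : (b.repr x i) • b i ∈ Φ := by rw [← hx_eq]; exact hx.1
    rcases hΦ.2.2.2.2.2 (b i) (hb.1 i) (b.repr x i) hmul with h1 | h1
    · exact hxi (by rw [hx_eq, h1, one_smul])
    · have := hx.2 i; rw [h1] at this; linarith


end StmtSixAux

/-- Let `J ⊆ Φ⁺` be a nonempty order ideal of the root poset.  Then there
exists a simple root `α_i ∈ J` such that one cannot find two distinct roots
`β₁ ≠ β₂ ∈ J` with `s_{α_i}β₁ ∈ Φ⁺ ∖ J` and `s_{α_i}β₂ ∈ Φ⁺ ∖ J`. -/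
theorem stmt6 {E : Type*} [NormedAddCommGroup E] [InnerProductSpace ℝ E]
    (Φ : Set E) (hΦ : IsRootSystem Φ) {r : ℕ} (b : Module.Basis (Fin r) ℝ E) (hb : IsBase Φ b)
    (J : Set E) (hJ : IsRootIdeal Φ b J) (hJne : J.Nonempty) :
    ∃ i : Fin r, b i ∈ J ∧
      ¬∃ β₁ β₂ : E, β₁ ∈ J ∧ β₂ ∈ J ∧ β₁ ≠ β₂ ∧
        sRefl (b i) β₁ ∈ posRoots Φ b \ J ∧ sRefl (b i) β₂ ∈ posRoots Φ b \ J := by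
  classical
  obtain ⟨hJsub, hJdown⟩ := hJ
  have hposΦ : posRoots Φ b ⊆ Φ := fun x hx => hx.1
  have hJΦ : J ⊆ Φ := fun x hx => hposΦ (hJsub hx)
  have hJfin : J.Finite := hΦ.1.subset hJΦ
  set Jf : Finset E := hJfin.toFinset with hJfdef
  have hmem : ∀ x, x ∈ Jf ↔ x ∈ J := fun x => hJfin.mem_toFinset
  set σ : E := ∑ β ∈ Jf, β with hσdef
  have hreprσ : ∀ j, b.repr σ j = ∑ β ∈ Jf, b.repr β j := by
    intro j
    rw [hσdef, map_sum, Finsupp.finset_sum_apply]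
  have hσnonneg : ∀ j, 0 ≤ b.repr σ j := by
    intro j; rw [hreprσ]
    exact Finset.sum_nonneg fun β hβ => (hJsub ((hmem β).1 hβ)).2 j
  have hσne : σ ≠ 0 := by
    obtain ⟨β₀, hβ₀⟩ := hJne
    have hβ₀Φ : β₀ ∈ Φ := hJΦ hβ₀
    have hβ₀ne : β₀ ≠ 0 := fun h => hΦ.2.1 (h ▸ hβ₀Φ)
    have : ∃ j, b.repr β₀ j ≠ 0 := by
      by_contra h; push_neg at h
      exact hβ₀ne (b.repr.map_eq_zero_iff.1 (Finsupp.ext h))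
    obtain ⟨j, hj⟩ := this
    have hj' : 0 < b.repr β₀ j := lt_of_le_of_ne ((hJsub hβ₀).2 j) (Ne.symm hj)
    have hle : b.repr β₀ j ≤ b.repr σ j := by
      rw [hreprσ]
      exact Finset.single_le_sum (fun β hβ => (hJsub ((hmem β).1 hβ)).2 j) ((hmem β₀).2 hβ₀)
    intro h0
    rw [h0] at hσnonneg hreprσ
    simp only [map_zero, Finsupp.zero_apply] at hreprσ
    have : b.repr (0:E) j = 0 := by simp
    rw [h0] at hle
    rw [this] at hle
    linarith
  obtain ⟨i, hi⟩ : ∃ i, 0 < ⟪b i, σ⟫_ℝ := by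
    by_contra h; push_neg at h
    have h1 : 0 < ⟪σ, σ⟫_ℝ := pos_inner_self' σ hσne
    have h2 : ⟪σ, σ⟫_ℝ = ∑ j, b.repr σ j * ⟪b j, σ⟫_ℝ := by
      calc ⟪σ, σ⟫_ℝ = ⟪∑ j, b.repr σ j • b j, σ⟫_ℝ := by rw [b.sum_repr]
        _ = ∑ j, ⟪b.repr σ j • b j, σ⟫_ℝ := sum_inner _ _ _
        _ = ∑ j, b.repr σ j * ⟪b j, σ⟫_ℝ := by simp [real_inner_smul_left]
    have h3 : ∑ j, b.repr σ j * ⟪b j, σ⟫_ℝ ≤ 0 :=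
      Finset.sum_nonpos fun j _ => mul_nonpos_iff.2 (Or.inl ⟨hσnonneg j, h j⟩)
    linarith
  refine ⟨i, ?_⟩
  set α : E := b i with hαdef
  have hαΦ : α ∈ Φ := hb.1 i
  have hα0 : α ≠ 0 := fun h => hΦ.2.1 (h ▸ hαΦ)
  have hαα : 0 < ⟪α, α⟫_ℝ := pos_inner_self' α hα0
  have hααne : ⟪α, α⟫_ℝ ≠ 0 := ne_of_gt hαα
  -- negative of α is not a positive root
  have hnegα : -α ∉ posRoots Φ b := by
    intro h
    have := h.2 i
    rw [map_neg, Finsupp.neg_apply, hαdef, Module.Basis.repr_self, Finsupp.single_apply] at this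
    simp at this
    try linarith
  have hsα : sRefl α α = -α := by
    show α - (2 * ⟪α, α⟫_ℝ / ⟪α, α⟫_ℝ) • α = -α
    have h2 : 2 * ⟪α, α⟫_ℝ / ⟪α, α⟫_ℝ = 2 := by field_simp
    rw [h2, two_smul]
    abel
  -- bad roots contribute at most -⟪α,α⟫/2
  have hbad : ∀ β, β ∈ J → β ≠ α → sRefl α β ∉ J → ⟪α, β⟫_ℝ ≤ -(⟪α, α⟫_ℝ / 2) := by
    intro β hβJ hβα hβout
    set c : ℝ := 2 * ⟪α, β⟫_ℝ / ⟪α, α⟫_ℝ with hc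
    have hcne : c ≠ 0 := by
      intro h0
      apply hβout
      have : sRefl α β = β := by
        show β - (2 * ⟪α, β⟫_ℝ / ⟪α, α⟫_ℝ) • α = β
        rw [← hc, h0, zero_smul, sub_zero]
      rw [this]; exact hβJ
    have hcnonpos : ¬ 0 < c := by
      intro hcpos
      apply hβout
      have hspos : sRefl α β ∈ posRoots Φ b := sRefl_mem_pos hΦ hb (hJsub hβJ) hβα
      refine hJdown _ hspos β hβJ ?_
      intro j
      have hdiff : β - sRefl α β = c • α := by
        show β - (β - (2 * ⟪α, β⟫_ℝ / ⟪α, α⟫_ℝ) • α) = c • α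
        rw [← hc]; abel
      rw [hdiff, map_smul, Finsupp.smul_apply, hαdef, Module.Basis.repr_self,
        Finsupp.single_apply, smul_eq_mul]
      by_cases hj : i = j
      · simp [hj]; positivity
      · simp [hj]
    obtain ⟨n, hn⟩ := hΦ.2.2.2.2.1 α hαΦ β (hJΦ hβJ)
    have hcn : c = (n : ℝ) := hn
    have hcneg : c < 0 := lt_of_le_of_ne (le_of_not_gt hcnonpos) hcne
    have hnneg : n < 0 := by exact_mod_cast hcn ▸ hcneg
    have hnint : n ≤ -1 := by omega
    have hnle : (n : ℝ) ≤ -1 := by exact_mod_cast hnint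
    have hcle : c ≤ -1 := by rw [hcn]; exact hnle
    have hip : ⟪α, β⟫_ℝ = c * ⟪α, α⟫_ℝ / 2 := by
      rw [hc]; field_simp
    rw [hip]; nlinarith
  -- split the positive sum
  have hS : 0 < ∑ β ∈ Jf, ⟪α, β⟫_ℝ := by
    rw [← inner_sum]; exact hi
  set f : E → ℝ := fun β => ⟪α, β⟫_ℝ with hfdef
  have hsplit1 : ∑ β ∈ Jf, f β
      = (∑ β ∈ Jf.filter (fun β => β = α), f β)
        + ∑ β ∈ Jf.filter (fun β => ¬ β = α), f β :=
    (Finset.sum_filter_add_sum_filter_not Jf _ f).symm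
  set Rest : Finset E := Jf.filter (fun β => ¬ β = α) with hRest
  have hsplit2 : ∑ β ∈ Rest, f β
      = (∑ β ∈ Rest.filter (fun β => sRefl α β ∈ J), f β)
        + ∑ β ∈ Rest.filter (fun β => ¬ sRefl α β ∈ J), f β :=
    (Finset.sum_filter_add_sum_filter_not Rest _ f).symm
  set P : Finset E := Rest.filter (fun β => sRefl α β ∈ J) with hP
  set B : Finset E := Rest.filter (fun β => ¬ sRefl α β ∈ J) with hB
  -- P sums to zero via the involution sRefl α
  have hPmem : ∀ x, x ∈ P ↔ (x ∈ J ∧ x ≠ α ∧ sRefl α x ∈ J) := by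
    intro x
    simp only [hP, hRest, Finset.mem_filter, hmem]
    tauto
  have hPsum : ∑ β ∈ P, f β = 0 := by
    refine Finset.sum_involution (fun a _ => sRefl α a) ?_ ?_ (fun a ha => ?_) ?_
    · intro a _
      show f a + f (sRefl α a) = 0
      simp only [hfdef]
      rw [inner_sRefl' α a hααne]; ring
    · intro a _ hfa
      intro hcontra
      have : ⟪α, a⟫_ℝ = -⟪α, a⟫_ℝ := by
        conv_lhs => rw [← hcontra]
        exact inner_sRefl' α a hααne
      have : ⟪α, a⟫_ℝ = 0 := by linarith
      exact hfa this
    · -- membership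
      rw [hPmem] at ha ⊢
      obtain ⟨haJ, hane, hsa⟩ := ha
      refine ⟨hsa, ?_, ?_⟩
      · intro hcontra
        have hcontra' : sRefl α a = α := hcontra
        have ha2 : a = sRefl α α := by
          conv_lhs => rw [← sRefl_sRefl' α a hααne]
          rw [hcontra']
        rw [hsα] at ha2
        refine hnegα ?_
        rw [← ha2]
        exact hJsub haJ
      · show sRefl α (sRefl α a) ∈ J
        rw [sRefl_sRefl' α a hααne]; exact haJ
    · intro a _
      exact sRefl_sRefl' α a hααne
  -- B sums
  have hBmem : ∀ x, x ∈ B ↔ (x ∈ J ∧ x ≠ α ∧ sRefl α x ∉ J) := by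
    intro x
    simp only [hB, hRest, Finset.mem_filter, hmem]
    tauto
  have hBsum : ∑ β ∈ B, f β ≤ (B.card : ℝ) * (-(⟪α, α⟫_ℝ / 2)) := by
    calc ∑ β ∈ B, f β ≤ ∑ β ∈ B, (-(⟪α, α⟫_ℝ / 2)) := by
          refine Finset.sum_le_sum fun β hβ => ?_
          obtain ⟨h1, h2, h3⟩ := (hBmem β).1 hβ
          exact hbad β h1 h2 h3
      _ = (B.card : ℝ) * (-(⟪α, α⟫_ℝ / 2)) := by
          rw [Finset.sum_const, nsmul_eq_mul]
  -- the filter-eq part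
  have hAsum : (∑ β ∈ Jf.filter (fun β => β = α), f β)
      = if α ∈ J then ⟪α, α⟫_ℝ else 0 := by
    rw [Finset.filter_eq' Jf α]
    by_cases h : α ∈ J
    · rw [if_pos ((hmem α).2 h), if_pos h, Finset.sum_singleton]
    · rw [if_neg (fun hc => h ((hmem α).1 hc)), if_neg h, Finset.sum_empty]
  -- conclude α ∈ J
  have hAiJ : α ∈ J := by
    by_contra h
    rw [hsplit1, hAsum, if_neg h, hsplit2, hPsum] at hS
    have : (0:ℝ) ≤ (B.card : ℝ) * (⟪α, α⟫_ℝ / 2) := by positivity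
    nlinarith [hBsum]
  refine ⟨hAiJ, ?_⟩
  rintro ⟨β₁, β₂, h1, h2, hne, ⟨hp1, ho1⟩, ⟨hp2, ho2⟩⟩
  have hne1 : β₁ ≠ α := by
    intro h; rw [h, hsα] at hp1; exact hnegα hp1
  have hne2 : β₂ ≠ α := by
    intro h; rw [h, hsα] at hp2; exact hnegα hp2
  have hb1 : β₁ ∈ B := (hBmem β₁).2 ⟨h1, hne1, ho1⟩
  have hb2 : β₂ ∈ B := (hBmem β₂).2 ⟨h2, hne2, ho2⟩
  have hcard : 1 < B.card := Finset.one_lt_card.2 ⟨β₁, hb1, β₂, hb2, hne⟩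
  have hcard' : (2:ℝ) ≤ (B.card : ℝ) := by exact_mod_cast hcard
  rw [hsplit1, hAsum, if_pos hAiJ, hsplit2, hPsum] at hS
  nlinarith [hBsum]
end

section
/- Let C = W_D^A for some D ⊆ A ⊆ Φ⁺ (a convex subset of W) with |C| > 1, and for β ∈ Φ define h(β) = (1/|C|) Σ_{w∈C} ht(wβ). Then there exists β ∈ Φ⁺ such that |h(β)| < 1. -/
open InnerProductSpace

noncomputable section
namespace Stmt7Aux


variable {E : Type*} [NormedAddCommGroup E] [InnerProductSpace ℝ E]

lemma inner_self_pos' {x : E} (hx : x ≠ 0) : 0 < ⟪x, x⟫_ℝ :=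
  lt_of_le_of_ne real_inner_self_nonneg (Ne.symm (inner_self_ne_zero.mpr hx))

lemma inner_sRefl {α : E} (hα : α ≠ 0) (x y : E) :
    ⟪sRefl α x, sRefl α y⟫_ℝ = ⟪x, y⟫_ℝ := by
  have hA : ⟪α, α⟫_ℝ ≠ 0 := ne_of_gt (inner_self_pos' hα)
  simp only [sRefl, inner_sub_left, inner_sub_right, real_inner_smul_left,
    real_inner_smul_right]
  rw [real_inner_comm x α]
  field_simp
  ring

lemma sRefl_sRefl (α x : E) : sRefl α (sRefl α x) = x := by
  by_cases hα : α = 0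
  · simp [sRefl, hα]
  · have hA : ⟪α, α⟫_ℝ ≠ 0 := ne_of_gt (inner_self_pos' hα)
    simp only [sRefl, inner_sub_right, real_inner_smul_right]
    rw [sub_sub, ← add_smul]
    have h : 2 * ⟪α, x⟫_ℝ / ⟪α, α⟫_ℝ +
        2 * (⟪α, x⟫_ℝ - 2 * ⟪α, x⟫_ℝ / ⟪α, α⟫_ℝ * ⟪α, α⟫_ℝ) / ⟪α, α⟫_ℝ = 0 := by
      field_simp
      ring
    rw [h, zero_smul, sub_zero]

lemma sRefl_self {α : E} (hα : α ≠ 0) : sRefl α α = -α := by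
  have hA : ⟪α, α⟫_ℝ ≠ 0 := ne_of_gt (inner_self_pos' hα)
  have h : 2 * ⟪α, α⟫_ℝ / ⟪α, α⟫_ℝ = 2 := by field_simp
  rw [sRefl, h, two_smul]
  abel

lemma sRefl_neg (α x : E) : sRefl (-α) x = sRefl α x := by
  simp [sRefl, inner_neg_neg, inner_neg_left, mul_neg, neg_div, neg_smul, smul_neg, neg_neg]

def sEquiv (α : E) : E ≃ₗ[ℝ] E where
  toFun := sRefl α
  invFun := sRefl α
  left_inv := sRefl_sRefl α
  right_inv := sRefl_sRefl α
  map_add' x y := by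
    simp only [sRefl, inner_add_right]
    rw [mul_add, add_div, add_smul]
    abel
  map_smul' t x := by
    simp only [sRefl, real_inner_smul_right, RingHom.id_apply, smul_sub, smul_smul]
    congr 1
    ring

@[simp] lemma sEquiv_apply (α x : E) : sEquiv α x = sRefl α x := rfl

lemma mul_apply' (f g : E ≃ₗ[ℝ] E) (x : E) : (f * g) x = f (g x) := rfl

lemma one_apply' (x : E) : (1 : E ≃ₗ[ℝ] E) x = x := rfl

lemma inv_eq_symm (f : E ≃ₗ[ℝ] E) : f⁻¹ = f.symm := rfl

lemma sEquiv_inv (α : E) : (sEquiv α)⁻¹ = sEquiv α := by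
  refine LinearEquiv.ext fun x => ?_
  rw [inv_eq_symm]
  exact rfl

lemma sEquiv_mul_self (α : E) : sEquiv α * sEquiv α = 1 := by
  refine LinearEquiv.ext fun x => ?_
  rw [mul_apply', one_apply']
  exact sRefl_sRefl α x

lemma sEquiv_neg (α : E) : sEquiv (-α) = sEquiv α :=
  LinearEquiv.ext fun x => sRefl_neg α x


variable {Φ : Set E}

lemma root_ne_zero (hΦ : IsRootSystem Φ) {α : E} (hα : α ∈ Φ) : α ≠ 0 :=
  fun h => hΦ.2.1 (h ▸ hα)

lemma sEquiv_mem_weyl {α : E} (hα : α ∈ Φ) : sEquiv α ∈ weylGroup Φ :=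
  Subgroup.subset_closure ⟨α, hα, fun _ => rfl⟩

lemma w_inner (hΦ : IsRootSystem Φ) {w : E ≃ₗ[ℝ] E} (hw : w ∈ weylGroup Φ) :
    ∀ x y : E, ⟪w x, w y⟫_ℝ = ⟪x, y⟫_ℝ := by
  refine Subgroup.closure_induction
    (p := fun g _ => ∀ x y : E, ⟪g x, g y⟫_ℝ = ⟪x, y⟫_ℝ) ?_ ?_ ?_ ?_ hw
  · rintro g ⟨α, hα, hg⟩ x y
    rw [hg, hg]
    exact inner_sRefl (root_ne_zero hΦ hα) x y
  · intro x y; rw [one_apply', one_apply']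
  · intro g h _ _ pg ph x y
    rw [mul_apply', mul_apply', pg, ph]
  · intro g _ pg x y
    have h1 : ∀ z : E, g (g⁻¹ z) = z := fun z => g.apply_symm_apply z
    rw [← pg (g⁻¹ x) (g⁻¹ y), h1, h1]

lemma w_maps (hΦ : IsRootSystem Φ) {w : E ≃ₗ[ℝ] E} (hw : w ∈ weylGroup Φ) :
    ∀ α ∈ Φ, w α ∈ Φ := by
  have main : ∀ g ∈ weylGroup Φ,
      (∀ α ∈ Φ, g α ∈ Φ) ∧ (∀ α ∈ Φ, g.symm α ∈ Φ) := by
    intro g hg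
    refine Subgroup.closure_induction
      (p := fun g _ => (∀ α ∈ Φ, g α ∈ Φ) ∧ (∀ α ∈ Φ, g.symm α ∈ Φ)) ?_ ?_ ?_ ?_ hg
    · rintro g ⟨α₀, hα₀, hgdef⟩
      constructor
      · intro α hα
        rw [hgdef]
        exact hΦ.2.2.2.1 α₀ hα₀ α hα
      · intro α hα
        have hsym : g.symm α = sRefl α₀ α := by
          rw [LinearEquiv.symm_apply_eq, hgdef]
          exact (sRefl_sRefl α₀ α).symm
        rw [hsym]
        exact hΦ.2.2.2.1 α₀ hα₀ α hα
    · exact ⟨fun α hα => hα, fun α hα => hα⟩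
    · intro g h _ _ pg ph
      constructor
      · intro α hα
        rw [mul_apply']
        exact pg.1 _ (ph.1 α hα)
      · intro α hα
        have : (g * h).symm α = h.symm (g.symm α) := rfl
        rw [this]
        exact ph.2 _ (pg.2 α hα)
    · intro g _ pg
      refine ⟨fun α hα => pg.2 α hα, fun α hα => ?_⟩
      have : (g⁻¹ : E ≃ₗ[ℝ] E).symm = g := by
        rw [inv_eq_symm, LinearEquiv.symm_symm]
      rw [this]
      exact pg.1 α hα
  exact (main w hw).1

lemma w_symm_mem {w : E ≃ₗ[ℝ] E} (hw : w ∈ weylGroup Φ) : w.symm ∈ weylGroup Φ := by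
  have := (weylGroup Φ).inv_mem hw
  rwa [inv_eq_symm] at this

lemma w_adjoint (hΦ : IsRootSystem Φ) {w : E ≃ₗ[ℝ] E} (hw : w ∈ weylGroup Φ)
    (x y : E) : ⟪w x, y⟫_ℝ = ⟪x, w.symm y⟫_ℝ := by
  conv_lhs => rw [← w.apply_symm_apply y]
  exact w_inner hΦ hw x (w.symm y)

lemma w_adjoint' (hΦ : IsRootSystem Φ) {w : E ≃ₗ[ℝ] E} (hw : w ∈ weylGroup Φ)
    (x y : E) : ⟪x, w y⟫_ℝ = ⟪w.symm x, y⟫_ℝ := by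
  conv_lhs => rw [← w.apply_symm_apply x]
  exact w_inner hΦ hw (w.symm x) y

lemma weyl_finite (hΦ : IsRootSystem Φ) : Finite ↥(weylGroup Φ) := by
  have hΦfin : Finite ↥Φ := hΦ.1.to_subtype
  let f : ↥(weylGroup Φ) → (↥Φ → ↥Φ) := fun w a =>
    ⟨(w : E ≃ₗ[ℝ] E) a.1, w_maps hΦ w.2 a.1 a.2⟩
  have hf : Function.Injective f := by
    intro w w' h
    apply Subtype.ext
    apply LinearEquiv.toLinearMap_injective
    apply LinearMap.ext_on hΦ.2.2.1
    intro x hx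
    exact congrArg Subtype.val (congrFun h ⟨x, hx⟩)
  exact Finite.of_injective f hf

lemma sEquiv_conj {w : E ≃ₗ[ℝ] E} (hw : ∀ x y : E, ⟪w x, w y⟫_ℝ = ⟪x, y⟫_ℝ) (α : E) :
    sEquiv (w α) = w * sEquiv α * w⁻¹ := by
  refine LinearEquiv.ext fun x => ?_
  have h1 : sRefl (w α) (w (w.symm x)) = w (sRefl α (w.symm x)) := by
    simp only [sRefl, hw, map_sub, map_smul]
  calc sEquiv (w α) x = sRefl (w α) (w (w.symm x)) := by rw [w.apply_symm_apply]; rfl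
    _ = w (sRefl α (w.symm x)) := h1
    _ = (w * sEquiv α * w⁻¹) x := rfl

variable {r : ℕ} {b : Module.Basis (Fin r) ℝ E} {ω : Fin r → E}

lemma mem_posRoots {α : E} : α ∈ posRoots Φ b ↔ α ∈ Φ ∧ ∀ i, 0 ≤ b.repr α i := Iff.rfl

lemma repr_eq_inner (hω : ∀ i j, ⟪b i, ω j⟫_ℝ = if i = j then 1 else 0) (γ : E)
    (j : Fin r) : ⟪γ, ω j⟫_ℝ = b.repr γ j := by
  conv_lhs => rw [← b.sum_repr γ]
  rw [sum_inner]
  simp [real_inner_smul_left, hω, mul_ite]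

lemma inner_rho (hω : ∀ i j, ⟪b i, ω j⟫_ℝ = if i = j then 1 else 0) (γ : E) :
    ⟪γ, ∑ i, ω i⟫_ℝ = ∑ i, b.repr γ i := by
  rw [inner_sum]
  exact Finset.sum_congr rfl fun j _ => repr_eq_inner hω γ j

lemma eq_zero_of_repr_zero {γ : E} (h : ∀ i, b.repr γ i = 0) : γ = 0 := by
  rw [← b.sum_repr γ]
  simp [h]

lemma ht_ge_one (hΦ : IsRootSystem Φ) (hb : IsBase Φ b)
    (hω : ∀ i j, ⟪b i, ω j⟫_ℝ = if i = j then 1 else 0)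
    {γ : E} (hγ : γ ∈ posRoots Φ b) : 1 ≤ ⟪γ, ∑ i, ω i⟫_ℝ := by
  rw [inner_rho hω]
  have hγ0 : γ ≠ 0 := root_ne_zero hΦ hγ.1
  have hex : ∃ i, b.repr γ i ≠ 0 := by
    by_contra h
    push_neg at h
    exact hγ0 (eq_zero_of_repr_zero h)
  obtain ⟨i₀, hi₀⟩ := hex
  rcases hb.2 γ hγ.1 with hcase | hcase
  · obtain ⟨k, hk⟩ := hcase i₀
    have hk1 : 1 ≤ k := by
      rcases Nat.eq_zero_or_pos k with h0 | h1
      · exact absurd (by rw [hk, h0]; norm_num) hi₀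
      · exact h1
    have h1 : (1 : ℝ) ≤ b.repr γ i₀ := by rw [hk]; exact_mod_cast hk1
    calc (1 : ℝ) ≤ b.repr γ i₀ := h1
      _ ≤ ∑ i, b.repr γ i :=
        Finset.single_le_sum (fun i _ => hγ.2 i) (Finset.mem_univ i₀)
  · obtain ⟨k, hk⟩ := hcase i₀
    have : b.repr γ i₀ = 0 :=
      le_antisymm (by rw [hk]; exact neg_nonpos.mpr (Nat.cast_nonneg k)) (hγ.2 i₀)
    exact absurd this hi₀

lemma neg_mem (hΦ : IsRootSystem Φ) {γ : E} (hγ : γ ∈ Φ) : -γ ∈ Φ := by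
  have h := hΦ.2.2.2.1 γ hγ γ hγ
  rwa [sRefl_self (root_ne_zero hΦ hγ)] at h

lemma pos_or_neg_pos (hΦ : IsRootSystem Φ) (hb : IsBase Φ b) {γ : E} (hγ : γ ∈ Φ) :
    γ ∈ posRoots Φ b ∨ -γ ∈ posRoots Φ b := by
  rcases hb.2 γ hγ with hcase | hcase
  · left
    refine ⟨hγ, fun i => ?_⟩
    obtain ⟨k, hk⟩ := hcase i
    rw [hk]; positivity
  · right
    refine ⟨neg_mem hΦ hγ, fun i => ?_⟩
    obtain ⟨k, hk⟩ := hcase i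
    rw [map_neg, Finsupp.neg_apply, hk, neg_neg]
    positivity

lemma not_both_pos (hΦ : IsRootSystem Φ) (hb : IsBase Φ b)
    (hω : ∀ i j, ⟪b i, ω j⟫_ℝ = if i = j then 1 else 0)
    {γ : E} (h1 : γ ∈ posRoots Φ b) (h2 : -γ ∈ posRoots Φ b) : False := by
  have a1 := ht_ge_one hΦ hb hω h1
  have a2 := ht_ge_one hΦ hb hω h2
  rw [inner_neg_left] at a2
  linarith

lemma mem_pos_of_ht_pos (hΦ : IsRootSystem Φ) (hb : IsBase Φ b)
    (hω : ∀ i j, ⟪b i, ω j⟫_ℝ = if i = j then 1 else 0)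
    {γ : E} (hγ : γ ∈ Φ) (h : 0 < ⟪γ, ∑ i, ω i⟫_ℝ) : γ ∈ posRoots Φ b := by
  rcases pos_or_neg_pos hΦ hb hγ with hp | hp
  · exact hp
  · have := ht_ge_one hΦ hb hω hp
    rw [inner_neg_left] at this
    linarith

lemma abs_ht_ge_one (hΦ : IsRootSystem Φ) (hb : IsBase Φ b)
    (hω : ∀ i j, ⟪b i, ω j⟫_ℝ = if i = j then 1 else 0)
    {γ : E} (hγ : γ ∈ Φ) : 1 ≤ |⟪γ, ∑ i, ω i⟫_ℝ| := by
  rcases pos_or_neg_pos hΦ hb hγ with hp | hp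
  · calc (1:ℝ) ≤ ⟪γ, ∑ i, ω i⟫_ℝ := ht_ge_one hΦ hb hω hp
      _ ≤ |⟪γ, ∑ i, ω i⟫_ℝ| := le_abs_self _
  · have h := ht_ge_one hΦ hb hω hp
    rw [inner_neg_left] at h
    calc (1:ℝ) ≤ -⟪γ, ∑ i, ω i⟫_ℝ := h
      _ ≤ |⟪γ, ∑ i, ω i⟫_ℝ| := neg_le_abs _

lemma inner_bi_rho (hω : ∀ i j, ⟪b i, ω j⟫_ℝ = if i = j then 1 else 0) (i : Fin r) :
    ⟪b i, ∑ j, ω j⟫_ℝ = 1 := by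
  rw [inner_sum]
  simp [hω]

lemma simple_mem_pos (hb : IsBase Φ b) (i : Fin r) : b i ∈ posRoots Φ b := by
  refine ⟨hb.1 i, fun j => ?_⟩
  rw [b.repr_self]
  rw [Finsupp.single_apply]
  split <;> norm_num

lemma inner_base_nonpos (hΦ : IsRootSystem Φ) (hb : IsBase Φ b) {i j : Fin r}
    (hij : i ≠ j) : ⟪b i, b j⟫_ℝ ≤ 0 := by
  by_contra h
  push_neg at h
  have hbi0 : (b i : E) ≠ 0 := root_ne_zero hΦ (hb.1 i)
  have hA : 0 < ⟪b i, b i⟫_ℝ := inner_self_pos' hbi0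
  have hc : 0 < 2 * ⟪b i, b j⟫_ℝ / ⟪b i, b i⟫_ℝ := by positivity
  set c := 2 * ⟪b i, b j⟫_ℝ / ⟪b i, b i⟫_ℝ with hcdef
  have hγ : sRefl (b i) (b j) ∈ Φ := hΦ.2.2.2.1 (b i) (hb.1 i) (b j) (hb.1 j)
  have hrepr : ∀ k, b.repr (sRefl (b i) (b j)) k
      = b.repr (b j) k - c * b.repr (b i) k := by
    intro k
    rw [sRefl, map_sub, map_smul]
    simp [Finsupp.single_apply, mul_ite, hcdef, real_inner_self_eq_norm_sq]
  have hj : b.repr (sRefl (b i) (b j)) j = 1 := by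
    rw [hrepr]
    simp [b.repr_self, Finsupp.single_apply, hij]
  have hi : b.repr (sRefl (b i) (b j)) i = -c := by
    rw [hrepr]
    simp [b.repr_self, Finsupp.single_apply, hij, Ne.symm hij]
  rcases hb.2 _ hγ with hcase | hcase
  · obtain ⟨k, hk⟩ := hcase i
    rw [hi] at hk
    have hk0 : (0:ℝ) ≤ (k:ℝ) := Nat.cast_nonneg k
    linarith
  · obtain ⟨k, hk⟩ := hcase j
    rw [hj] at hk
    have hk0 : (0:ℝ) ≤ (k:ℝ) := Nat.cast_nonneg k
    linarith

lemma repr_omega_nonneg (hΦ : IsRootSystem Φ) (hb : IsBase Φ b)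
    (hω : ∀ i j, ⟪b i, ω j⟫_ℝ = if i = j then 1 else 0) (j : Fin r) (i : Fin r) :
    0 ≤ b.repr (ω j) i := by
  set c : Fin r → ℝ := fun i => b.repr (ω j) i with hcdef
  set p : Fin r → ℝ := fun i => max (c i) 0 with hpdef
  set m : Fin r → ℝ := fun i => max (-c i) 0 with hmdef
  have hpm : ∀ i, p i - m i = c i := fun i => max_zero_sub_max_neg_zero_eq_self (c i)
  have hp0 : ∀ i, 0 ≤ p i := fun i => le_max_right _ _
  have hm0 : ∀ i, 0 ≤ m i := fun i => le_max_right _ _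
  have hpm0 : ∀ i, p i * m i = 0 := by
    intro i
    rcases le_total (c i) 0 with h | h
    · have : p i = 0 := max_eq_right h
      rw [this, zero_mul]
    · have : m i = 0 := max_eq_right (neg_nonpos.mpr h)
      rw [this, mul_zero]
  set μ : E := ∑ i, m i • b i with hμdef
  set lam : E := ∑ i, p i • b i with hlamdef
  have hsplit : lam - μ = ω j := by
    rw [hlamdef, hμdef, ← Finset.sum_sub_distrib]
    conv_rhs => rw [← b.sum_repr (ω j)]
    refine Finset.sum_congr rfl fun i _ => ?_
    rw [← sub_smul, hpm]
  have h1 : ⟪lam, μ⟫_ℝ ≤ 0 := by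
    have hexpand : ⟪lam, μ⟫_ℝ = ∑ i, ∑ k, (p i * m k) * ⟪b i, b k⟫_ℝ := by
      rw [hlamdef, hμdef, sum_inner]
      refine Finset.sum_congr rfl fun i _ => ?_
      rw [real_inner_smul_left, inner_sum, Finset.mul_sum]
      refine Finset.sum_congr rfl fun k _ => ?_
      rw [real_inner_smul_right]
      ring
    rw [hexpand]
    refine Finset.sum_nonpos fun i _ => Finset.sum_nonpos fun k _ => ?_
    by_cases hik : i = k
    · subst hik
      rw [hpm0 i, zero_mul]
    · exact mul_nonpos_of_nonneg_of_nonpos (mul_nonneg (hp0 i) (hm0 k))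
        (inner_base_nonpos hΦ hb hik)
  have h2 : 0 ≤ ⟪ω j, μ⟫_ℝ := by
    rw [hμdef, inner_sum]
    refine Finset.sum_nonneg fun k _ => ?_
    rw [real_inner_smul_right, real_inner_comm, hω]
    split
    · simpa using hm0 k
    · simp
  have h3 : ⟪μ, μ⟫_ℝ ≤ 0 := by
    have hsub : ⟪ω j, μ⟫_ℝ = ⟪lam, μ⟫_ℝ - ⟪μ, μ⟫_ℝ := by
      rw [← hsplit, inner_sub_left]
    linarith
  have hμ0 : μ = 0 := real_inner_self_nonpos.mp h3
  have hm_zero : ∀ i, m i = 0 := by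
    intro i
    exact Fintype.linearIndependent_iff.mp b.linearIndependent m (hμ0 ▸ rfl) i
  have := hm_zero i
  have hle : -c i ≤ 0 := by
    rw [← this]
    exact le_max_left _ _
  simpa [hcdef] using neg_nonpos.mp hle

lemma rho_inner_nonneg (hΦ : IsRootSystem Φ) (hb : IsBase Φ b)
    (hω : ∀ i j, ⟪b i, ω j⟫_ℝ = if i = j then 1 else 0) {y : E}
    (hy : ∀ i, 0 ≤ ⟪b i, y⟫_ℝ) : 0 ≤ ⟪∑ j, ω j, y⟫_ℝ := by
  rw [sum_inner]
  refine Finset.sum_nonneg fun j _ => ?_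
  have : ⟪ω j, y⟫_ℝ = ∑ i, b.repr (ω j) i * ⟪b i, y⟫_ℝ := by
    conv_lhs => rw [← b.sum_repr (ω j)]
    rw [sum_inner]
    refine Finset.sum_congr rfl fun i _ => ?_
    rw [real_inner_smul_left]
  rw [this]
  exact Finset.sum_nonneg fun i _ =>
    mul_nonneg (repr_omega_nonneg hΦ hb hω j i) (hy i)

lemma sRefl_simple_pos (hΦ : IsRootSystem Φ) (hb : IsBase Φ b) {β : E} (i : Fin r)
    (hβ : β ∈ posRoots Φ b) (hne : β ≠ b i) : sRefl (b i) β ∈ posRoots Φ b := by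
  have hγΦ : sRefl (b i) β ∈ Φ := hΦ.2.2.2.1 (b i) (hb.1 i) β hβ.1
  -- find j ≠ i with positive coefficient
  have hex : ∃ j, j ≠ i ∧ 0 < b.repr β j := by
    by_contra hall
    push_neg at hall
    have hrepr : ∀ j, j ≠ i → b.repr β j = 0 :=
      fun j hj => le_antisymm (hall j hj) (hβ.2 j)
    have hβeq : β = b.repr β i • b i := by
      conv_lhs => rw [← b.sum_repr β]
      rw [Finset.sum_eq_single i]
      · intro j _ hj
        rw [hrepr j hj, zero_smul]
      · intro h
        exact absurd (Finset.mem_univ i) h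
    have := hΦ.2.2.2.2.2 (b i) (hb.1 i) (b.repr β i) (hβeq ▸ hβ.1)
    rcases this with h1 | h1
    · exact hne (by rw [hβeq, h1, one_smul])
    · have := hβ.2 i
      rw [h1] at this
      linarith
  obtain ⟨j, hji, hj⟩ := hex
  have hreprγ : b.repr (sRefl (b i) β) j = b.repr β j := by
    rw [sRefl, map_sub, map_smul]
    simp [Finsupp.single_apply, Ne.symm hji]
  rcases hb.2 _ hγΦ with hcase | hcase
  · refine ⟨hγΦ, fun k => ?_⟩
    obtain ⟨n, hn⟩ := hcase k
    rw [hn]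
    positivity
  · obtain ⟨n, hn⟩ := hcase j
    rw [hreprγ] at hn
    have : (0:ℝ) ≤ (n:ℝ) := Nat.cast_nonneg n
    linarith

/-- Every reflection in a root is a product of simple reflections. -/
lemma exists_word_refl (hΦ : IsRootSystem Φ) (hb : IsBase Φ b)
    (hω : ∀ i j, ⟪b i, ω j⟫_ℝ = if i = j then 1 else 0) :
    ∀ α ∈ Φ, ∃ l : List (E ≃ₗ[ℝ] E),
      (∀ s ∈ l, ∃ i, s = sEquiv (b i)) ∧ l.prod = sEquiv α := by
  have key : ∀ n : ℕ, ∀ α ∈ posRoots Φ b, ⟪α, ∑ i, ω i⟫_ℝ ≤ n →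
      ∃ l : List (E ≃ₗ[ℝ] E),
        (∀ s ∈ l, ∃ i, s = sEquiv (b i)) ∧ l.prod = sEquiv α := by
    intro n
    induction n with
    | zero =>
      intro α hα hle
      have := ht_ge_one hΦ hb hω hα
      norm_num at hle
      linarith
    | succ n ih =>
      intro α hα hle
      by_cases hsimple : ∃ i, α = b i
      · obtain ⟨i, rfl⟩ := hsimple
        refine ⟨[sEquiv (b i)], ?_, by simp⟩
        intro s hs
        rw [List.mem_singleton] at hs
        exact ⟨i, hs⟩
      · push_neg at hsimple
        have hα0 : α ≠ 0 := root_ne_zero hΦ hα.1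
        have hAα : 0 < ⟪α, α⟫_ℝ := inner_self_pos' hα0
        have hexi : ∃ i, 0 < b.repr α i * ⟪b i, α⟫_ℝ := by
          by_contra hno
          push_neg at hno
          have hsum : ⟪α, α⟫_ℝ = ∑ i, b.repr α i * ⟪b i, α⟫_ℝ := by
            nth_rewrite 1 [← b.sum_repr α]
            rw [sum_inner]
            exact Finset.sum_congr rfl fun i _ => real_inner_smul_left _ _ _
          have : ⟪α, α⟫_ℝ ≤ 0 := hsum ▸ Finset.sum_nonpos fun i _ => hno i
          linarith
        obtain ⟨i, hi⟩ := hexi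
        have hbiα : 0 < ⟪b i, α⟫_ℝ := by
          by_contra hle2
          push_neg at hle2
          exact absurd hi
            (not_lt.mpr (mul_nonpos_of_nonneg_of_nonpos (hα.2 i) hle2))
        have hbi0 : (b i : E) ≠ 0 := root_ne_zero hΦ (hb.1 i)
        have hA : 0 < ⟪b i, b i⟫_ℝ := inner_self_pos' hbi0
        have hγpos : sRefl (b i) α ∈ posRoots Φ b :=
          sRefl_simple_pos hΦ hb i hα (hsimple i)
        set c := 2 * ⟪b i, α⟫_ℝ / ⟪b i, b i⟫_ℝ with hcdef
        have hcpos : 0 < c := by positivity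
        obtain ⟨mz, hmz⟩ := hΦ.2.2.2.2.1 (b i) (hb.1 i) α hα.1
        have hc1 : (1:ℝ) ≤ c := by
          have h1 : (1:ℤ) ≤ mz := by
            by_contra hlt
            push_neg at hlt
            have hle0 : (mz : ℝ) ≤ 0 := by exact_mod_cast Int.lt_add_one_iff.mp hlt
            rw [hcdef, hmz] at hcpos
            linarith
          rw [hcdef, hmz]
          exact_mod_cast h1
        have hht : ⟪sRefl (b i) α, ∑ k, ω k⟫_ℝ = ⟪α, ∑ k, ω k⟫_ℝ - c := by
          rw [sRefl, inner_sub_left, real_inner_smul_left, inner_bi_rho hω, mul_one]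
        have hlt : ⟪sRefl (b i) α, ∑ k, ω k⟫_ℝ ≤ n := by
          rw [hht]
          push_cast at hle ⊢
          linarith
        obtain ⟨l, hl, hlp⟩ := ih (sRefl (b i) α) hγpos hlt
        refine ⟨[sEquiv (b i)] ++ l ++ [sEquiv (b i)], ?_, ?_⟩
        · intro s hs
          simp only [List.mem_append, List.mem_singleton] at hs
          rcases hs with (hs | hs) | hs
          · exact ⟨i, hs⟩
          · exact hl s hs
          · exact ⟨i, hs⟩
        · rw [List.prod_append, List.prod_append, List.prod_singleton, hlp]
          have hsi : ∀ x y : E, ⟪sEquiv (b i) x, sEquiv (b i) y⟫_ℝ = ⟪x, y⟫_ℝ :=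
            fun x y => inner_sRefl hbi0 x y
          have hconj := sEquiv_conj hsi α
          have hconj' : sEquiv (sRefl (b i) α)
              = sEquiv (b i) * sEquiv α * sEquiv (b i) := by
            rw [show sRefl (b i) α = sEquiv (b i) α from rfl, hconj, sEquiv_inv]
          rw [hconj']
          rw [show sEquiv (b i) * (sEquiv (b i) * sEquiv α * sEquiv (b i)) * sEquiv (b i)
            = (sEquiv (b i) * sEquiv (b i)) * sEquiv α * (sEquiv (b i) * sEquiv (b i))
            from by group]
          rw [sEquiv_mul_self, one_mul, mul_one]
  intro α hα
  rcases pos_or_neg_pos hΦ hb hα with hp | hp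
  · obtain ⟨n, hn⟩ := exists_nat_ge (⟪α, ∑ i, ω i⟫_ℝ)
    exact key n α hp hn
  · obtain ⟨n, hn⟩ := exists_nat_ge (⟪-α, ∑ i, ω i⟫_ℝ)
    obtain ⟨l, hl, hlp⟩ := key n (-α) hp hn
    exact ⟨l, hl, by rw [hlp, sEquiv_neg]⟩

lemma mem_weyl_word (hΦ : IsRootSystem Φ) (hb : IsBase Φ b)
    (hω : ∀ i j, ⟪b i, ω j⟫_ℝ = if i = j then 1 else 0)
    {w : E ≃ₗ[ℝ] E} (hw : w ∈ weylGroup Φ) :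
    ∃ l : List (E ≃ₗ[ℝ] E), (∀ s ∈ l, ∃ i, s = sEquiv (b i)) ∧ l.prod = w := by
  have hrev : ∀ l : List (E ≃ₗ[ℝ] E), (∀ s ∈ l, ∃ i, s = sEquiv (b i)) →
      (l.prod)⁻¹ = l.reverse.prod := by
    intro l
    induction l with
    | nil => intro _; simp
    | cons s l ih =>
      intro hword
      have hs := hword s List.mem_cons_self
      obtain ⟨i, rfl⟩ := hs
      rw [List.prod_cons, mul_inv_rev, List.reverse_cons, List.prod_append,
        List.prod_singleton, ih (fun t ht => hword t (List.mem_cons_of_mem _ ht)),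
        sEquiv_inv]
  refine Subgroup.closure_induction
    (p := fun g _ => ∃ l : List (E ≃ₗ[ℝ] E),
      (∀ s ∈ l, ∃ i, s = sEquiv (b i)) ∧ l.prod = g) ?_ ?_ ?_ ?_ hw
  · rintro g ⟨α, hα, hg⟩
    have hge : g = sEquiv α := LinearEquiv.ext fun x => hg x
    obtain ⟨l, hl, hlp⟩ := exists_word_refl hΦ hb hω α hα
    exact ⟨l, hl, by rw [hlp, hge]⟩
  · exact ⟨[], by simp, rfl⟩
  · rintro g h _ _ ⟨l₁, hl₁, rfl⟩ ⟨l₂, hl₂, rfl⟩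
    refine ⟨l₁ ++ l₂, ?_, List.prod_append⟩
    intro s hs
    rcases List.mem_append.mp hs with h | h
    · exact hl₁ s h
    · exact hl₂ s h
  · rintro g _ ⟨l, hl, rfl⟩
    exact ⟨l.reverse, fun s hs => hl s (List.mem_reverse.mp hs), (hrev l hl).symm⟩

lemma exchange (hΦ : IsRootSystem Φ) (hb : IsBase Φ b)
    (hω : ∀ i j, ⟪b i, ω j⟫_ℝ = if i = j then 1 else 0) :
    ∀ m : List (E ≃ₗ[ℝ] E), (∀ s ∈ m, ∃ i, s = sEquiv (b i)) →
    ∀ α ∈ posRoots Φ b, m.prod α ∉ posRoots Φ b →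
    ∃ m' : List (E ≃ₗ[ℝ] E), (∀ s ∈ m', ∃ i, s = sEquiv (b i)) ∧
      m'.length + 1 = m.length ∧ m.prod * sEquiv α = m'.prod := by
  intro m
  induction m with
  | nil =>
    intro _ α hα hneg
    rw [List.prod_nil] at hneg
    exact absurd hα (by simpa [one_apply'] using hneg)
  | cons s m ih =>
    intro hword α hα hneg
    obtain ⟨i, rfl⟩ := hword s List.mem_cons_self
    have hwm : ∀ t ∈ m, ∃ i, t = sEquiv (b i) :=
      fun t ht => hword t (List.mem_cons_of_mem _ ht)
    rw [List.prod_cons] at hneg ⊢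
    by_cases hc : m.prod α ∈ posRoots Φ b
    · have hne : sRefl (b i) (m.prod α) ∉ posRoots Φ b := by
        rwa [mul_apply'] at hneg
      have heq : m.prod α = b i := by
        by_contra hne2
        exact hne (sRefl_simple_pos hΦ hb i hc hne2)
      have hmW : m.prod ∈ weylGroup Φ := by
        refine Subgroup.list_prod_mem _ fun x hx => ?_
        obtain ⟨k, rfl⟩ := hwm x hx
        exact sEquiv_mem_weyl (hb.1 k)
      have hmi := w_inner hΦ hmW
      have hconj := sEquiv_conj hmi α
      rw [heq] at hconj
      refine ⟨m, hwm, by simp, ?_⟩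
      rw [hconj]
      have hαα := sEquiv_mul_self α
      rw [show m.prod * sEquiv α * (m.prod)⁻¹ * m.prod * sEquiv α
        = m.prod * (sEquiv α * sEquiv α) from by group, hαα, mul_one]
    · obtain ⟨m', hw', hlen, heqp⟩ := ih hwm α hα hc
      refine ⟨sEquiv (b i) :: m', ?_, ?_, ?_⟩
      · intro t ht
        rcases List.mem_cons.mp ht with h | h
        · exact ⟨i, h⟩
        · exact hw' t h
      · simp only [List.length_cons]
        omega
      · rw [List.prod_cons, mul_assoc, heqp]

lemma prod_pos_eq_one (hΦ : IsRootSystem Φ) (hb : IsBase Φ b)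
    (hω : ∀ i j, ⟪b i, ω j⟫_ℝ = if i = j then 1 else 0) :
    ∀ k : ℕ, ∀ l : List (E ≃ₗ[ℝ] E), l.length = k →
      (∀ s ∈ l, ∃ i, s = sEquiv (b i)) →
      (∀ β ∈ posRoots Φ b, l.prod β ∈ posRoots Φ b) → l.prod = 1 := by
  intro k
  induction k using Nat.strong_induction_on with
  | _ k ihk =>
    intro l hlen hword hpos
    rcases List.eq_nil_or_concat l with rfl | ⟨L, s, rfl⟩
    · simp
    · obtain ⟨i, rfl⟩ := hword s (by rw [List.concat_eq_append]; simp)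
      have hwL : ∀ t ∈ L, ∃ i, t = sEquiv (b i) :=
        fun t ht => hword t (by rw [List.concat_eq_append]; simp [ht])
      have hbi_pos : b i ∈ posRoots Φ b := simple_mem_pos hb i
      have hbi0 : (b i : E) ≠ 0 := root_ne_zero hΦ (hb.1 i)
      have happly : (L.concat (sEquiv (b i))).prod (b i) = -(L.prod (b i)) := by
        rw [List.concat_eq_append, List.prod_append, List.prod_singleton, mul_apply']
        rw [show sEquiv (b i) (b i) = sRefl (b i) (b i) from rfl,
          sRefl_self hbi0, map_neg]
      have h1 : -(L.prod (b i)) ∈ posRoots Φ b := by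
        rw [← happly]
        exact hpos (b i) hbi_pos
      have h2 : L.prod (b i) ∉ posRoots Φ b := fun h => not_both_pos hΦ hb hω h h1
      obtain ⟨m', hw', hlen', heqp⟩ := exchange hΦ hb hω L hwL (b i) hbi_pos h2
      have hlp : (L.concat (sEquiv (b i))).prod = m'.prod := by
        rw [List.concat_eq_append, List.prod_append, List.prod_singleton]
        exact heqp
      have hmlen : m'.length < k := by
        rw [List.concat_eq_append, List.length_append] at hlen
        simp at hlen
        omega
      have := ihk m'.length hmlen m' rfl hw'
        (fun β hβ => by rw [← hlp]; exact hpos β hβ)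
      rw [hlp, this]

lemma weyl_pos_eq_one (hΦ : IsRootSystem Φ) (hb : IsBase Φ b)
    (hω : ∀ i j, ⟪b i, ω j⟫_ℝ = if i = j then 1 else 0)
    {w : E ≃ₗ[ℝ] E} (hw : w ∈ weylGroup Φ)
    (hpos : ∀ β ∈ posRoots Φ b, w β ∈ posRoots Φ b) : w = 1 := by
  obtain ⟨l, hl, rfl⟩ := mem_weyl_word hΦ hb hω hw
  exact prod_pos_eq_one hΦ hb hω l.length l rfl hl hpos

end Stmt7Aux
end

/-- Let `C = W_D^A` for some `D ⊆ A ⊆ Φ⁺` with `|C| > 1`, and for `β ∈ Φ`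
define `h(β) = (1/|C|) Σ_{w∈C} ht(wβ)`, where `ht(γ) = ⟨γ, ω₁∨ + ⋯ + ω_r∨⟩` and the
fundamental coweights `ω₁∨, …, ω_r∨` form the dual basis of the base.  Then there exists
`β ∈ Φ⁺` with `|h(β)| < 1`. -/
theorem stmt7 {E : Type*} [NormedAddCommGroup E] [InnerProductSpace ℝ E]
    (Φ : Set E) (hΦ : IsRootSystem Φ) {r : ℕ} (b : Module.Basis (Fin r) ℝ E) (hb : IsBase Φ b)
    (ω : Fin r → E) (hω : ∀ i j, ⟪b i, ω j⟫_ℝ = if i = j then 1 else 0)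
    (D A : Set E) (hD : D ⊆ A) (hA : A ⊆ posRoots Φ b)
    (hC : 1 < (convexSubset Φ b D A).ncard) :
    ∃ β ∈ posRoots Φ b,
      |((convexSubset Φ b D A).ncard : ℝ)⁻¹ *
          ∑ᶠ w ∈ convexSubset Φ b D A, ⟪w β, ∑ i, ω i⟫_ℝ| < 1 := by
  classical
  open Stmt7Aux in
  set ρ : E := ∑ i, ω i with hρdef
  set C : Set (E ≃ₗ[ℝ] E) := convexSubset Φ b D A with hCdef
  -- basic facts about ρ
  have hbiρ : ∀ i, ⟪b i, ρ⟫_ℝ = 1 := fun i => by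
    rw [hρdef]; exact Stmt7Aux.inner_bi_rho hω i
  have hht1 : ∀ {γ : E}, γ ∈ posRoots Φ b → 1 ≤ ⟪γ, ρ⟫_ℝ := fun hγ => by
    rw [hρdef]; exact Stmt7Aux.ht_ge_one hΦ hb hω hγ
  have hpos_of : ∀ {γ : E}, γ ∈ Φ → 0 < ⟪γ, ρ⟫_ℝ → γ ∈ posRoots Φ b := by
    intro γ hγ h
    rw [hρdef] at h
    exact Stmt7Aux.mem_pos_of_ht_pos hΦ hb hω hγ h
  have hρnonneg : ∀ y : E, (∀ i, 0 ≤ ⟪b i, y⟫_ℝ) → 0 ≤ ⟪ρ, y⟫_ℝ := by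
    intro y hy
    rw [hρdef]
    exact Stmt7Aux.rho_inner_nonneg hΦ hb hω hy
  -- C is finite with at least 2 elements
  have hCfin : C.Finite := by
    by_contra h
    rw [Set.Infinite.ncard h] at hC
    exact absurd hC (by norm_num)
  set F : Finset (E ≃ₗ[ℝ] E) := hCfin.toFinset with hFdef
  have hFC : (↑F : Set (E ≃ₗ[ℝ] E)) = C := hCfin.coe_toFinset
  have hncard : C.ncard = F.card := by
    rw [← hFC, Set.ncard_coe_finset]
  have hmemW : ∀ w ∈ F, w ∈ weylGroup Φ := fun w hw =>
    ((hCfin.mem_toFinset.mp hw).1 : w ∈ weylGroup Φ)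
  set μ : E := ((C.ncard : ℝ))⁻¹ • ∑ w ∈ F, w.symm ρ with hμdef
  set T : E := ∑ w ∈ F, w.symm ρ with hTdef
  -- rewrite the average as an inner product with μ
  have hrw : ∀ β : E,
      ((C.ncard : ℝ))⁻¹ * ∑ᶠ w ∈ C, ⟪w β, ρ⟫_ℝ = ⟪β, μ⟫_ℝ := by
    intro β
    have hsum : ∑ᶠ w ∈ C, ⟪w β, ρ⟫_ℝ = ∑ w ∈ F, ⟪w β, ρ⟫_ℝ := by
      rw [← hFC]
      exact finsum_mem_coe_finset _ _
    rw [hsum,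
      Finset.sum_congr rfl (fun w hw => Stmt7Aux.w_adjoint hΦ (hmemW w hw) β ρ),
      ← inner_sum, hμdef, real_inner_smul_right]
  -- cardinality facts
  have hF1 : 1 < F.card := by rw [← hncard]; exact hC
  have hnpos : (0 : ℝ) < (F.card : ℝ) := by
    have : 0 < F.card := by omega
    exact_mod_cast this
  -- two distinct elements of C
  obtain ⟨w₀, hw₀, w₁, hw₁, hne⟩ := Finset.one_lt_card.mp hF1
  -- their images of ρ are distinct
  have hvne : w₀.symm ρ ≠ w₁.symm ρ := by
    intro hvv
    set t : E ≃ₗ[ℝ] E := w₀ * w₁⁻¹ with htdef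
    have htW : t ∈ weylGroup Φ :=
      mul_mem (hmemW w₀ hw₀) (inv_mem (hmemW w₁ hw₁))
    have htρ : t ρ = ρ := by
      rw [htdef, Stmt7Aux.mul_apply', Stmt7Aux.inv_eq_symm, ← hvv,
        w₀.apply_symm_apply]
    have htρ' : t.symm ρ = ρ := by
      rw [LinearEquiv.symm_apply_eq]
      exact htρ.symm
    have hposmap : ∀ β ∈ posRoots Φ b, t β ∈ posRoots Φ b := by
      intro β hβ
      refine hpos_of (Stmt7Aux.w_maps hΦ htW β hβ.1) ?_
      rw [Stmt7Aux.w_adjoint hΦ htW β ρ, htρ']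
      have := hht1 hβ
      linarith
    have ht1 : t = 1 := by
      rw [hρdef] at htρ' htρ
      exact Stmt7Aux.weyl_pos_eq_one hΦ hb hω htW (by rw [← hρdef] at htρ' htρ; exact hposmap)
    rw [htdef, mul_inv_eq_one] at ht1
    exact hne ht1
  -- strict convexity: ⟪μ,μ⟫ < ⟪ρ,ρ⟫
  have hμμ : ⟪μ, μ⟫_ℝ < ⟪ρ, ρ⟫_ℝ := by
    have hnormsymm : ∀ w ∈ F, ‖(w : E ≃ₗ[ℝ] E).symm ρ‖ = ‖ρ‖ := by
      intro w hw
      have h := Stmt7Aux.w_inner hΦ (Stmt7Aux.w_symm_mem (hmemW w hw)) ρ ρ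
      rw [norm_eq_sqrt_real_inner, norm_eq_sqrt_real_inner, h]
    have hterm_le : ∀ w ∈ F, ∀ w' ∈ F,
        ⟪w.symm ρ, w'.symm ρ⟫_ℝ ≤ ⟪ρ, ρ⟫_ℝ := by
      intro w hw w' hw'
      calc ⟪w.symm ρ, w'.symm ρ⟫_ℝ ≤ ‖w.symm ρ‖ * ‖w'.symm ρ‖ :=
            real_inner_le_norm _ _
        _ = ‖ρ‖ * ‖ρ‖ := by rw [hnormsymm w hw, hnormsymm w' hw']
        _ = ⟪ρ, ρ⟫_ℝ := (real_inner_self_eq_norm_mul_norm ρ).symm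
    have hstrict : ⟪w₀.symm ρ, w₁.symm ρ⟫_ℝ < ⟪ρ, ρ⟫_ℝ := by
      have hd : 0 < ⟪w₀.symm ρ - w₁.symm ρ, w₀.symm ρ - w₁.symm ρ⟫_ℝ :=
        Stmt7Aux.inner_self_pos' (sub_ne_zero.mpr hvne)
      rw [real_inner_sub_sub_self] at hd
      have e0 : ⟪w₀.symm ρ, w₀.symm ρ⟫_ℝ = ⟪ρ, ρ⟫_ℝ :=
        Stmt7Aux.w_inner hΦ (Stmt7Aux.w_symm_mem (hmemW w₀ hw₀)) ρ ρ
      have e1 : ⟪w₁.symm ρ, w₁.symm ρ⟫_ℝ = ⟪ρ, ρ⟫_ℝ :=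
        Stmt7Aux.w_inner hΦ (Stmt7Aux.w_symm_mem (hmemW w₁ hw₁)) ρ ρ
      rw [e0, e1] at hd
      linarith
    have hTT : ⟪T, T⟫_ℝ = ∑ w ∈ F, ∑ w' ∈ F, ⟪w.symm ρ, w'.symm ρ⟫_ℝ := by
      rw [hTdef, sum_inner]
      exact Finset.sum_congr rfl fun w _ => by rw [inner_sum]
    have hrow_le : ∀ w ∈ F,
        ∑ w' ∈ F, ⟪w.symm ρ, w'.symm ρ⟫_ℝ ≤ (F.card : ℝ) * ⟪ρ, ρ⟫_ℝ := by
      intro w hw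
      calc ∑ w' ∈ F, ⟪w.symm ρ, w'.symm ρ⟫_ℝ
          ≤ ∑ _w' ∈ F, ⟪ρ, ρ⟫_ℝ :=
            Finset.sum_le_sum (fun w' hw' => hterm_le w hw w' hw')
        _ = (F.card : ℝ) * ⟪ρ, ρ⟫_ℝ := by rw [Finset.sum_const, nsmul_eq_mul]
    have hrow_str : ∑ w' ∈ F, ⟪w₀.symm ρ, w'.symm ρ⟫_ℝ < (F.card : ℝ) * ⟪ρ, ρ⟫_ℝ := by
      have h := Finset.sum_lt_sum (f := fun w' => ⟪w₀.symm ρ, w'.symm ρ⟫_ℝ)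
        (g := fun _ => ⟪ρ, ρ⟫_ℝ)
        (fun w' hw' => hterm_le w₀ hw₀ w' hw') ⟨w₁, hw₁, hstrict⟩
      rwa [Finset.sum_const, nsmul_eq_mul] at h
    have hdouble : ⟪T, T⟫_ℝ < (F.card : ℝ) * ((F.card : ℝ) * ⟪ρ, ρ⟫_ℝ) := by
      rw [hTT]
      have h := Finset.sum_lt_sum
        (f := fun w => ∑ w' ∈ F, ⟪w.symm ρ, w'.symm ρ⟫_ℝ)
        (g := fun _ => (F.card : ℝ) * ⟪ρ, ρ⟫_ℝ)
        hrow_le ⟨w₀, hw₀, hrow_str⟩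
      rwa [Finset.sum_const, nsmul_eq_mul] at h
    have hμT : ⟪μ, μ⟫_ℝ = (F.card : ℝ)⁻¹ * ((F.card : ℝ)⁻¹ * ⟪T, T⟫_ℝ) := by
      rw [hμdef, real_inner_smul_left, real_inner_smul_right, hncard]
    rw [hμT]
    have hfin : (F.card : ℝ)⁻¹ * ((F.card : ℝ)⁻¹ *
        ((F.card : ℝ) * ((F.card : ℝ) * ⟪ρ, ρ⟫_ℝ))) = ⟪ρ, ρ⟫_ℝ := by
      field_simp
    calc (F.card : ℝ)⁻¹ * ((F.card : ℝ)⁻¹ * ⟪T, T⟫_ℝ)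
        < (F.card : ℝ)⁻¹ * ((F.card : ℝ)⁻¹ *
            ((F.card : ℝ) * ((F.card : ℝ) * ⟪ρ, ρ⟫_ℝ))) := by
          have hinv : (0:ℝ) < (F.card : ℝ)⁻¹ := by positivity
          exact mul_lt_mul_of_pos_left
            (mul_lt_mul_of_pos_left hdouble hinv) hinv
      _ = ⟪ρ, ρ⟫_ℝ := hfin
  -- suppose the conclusion fails
  by_contra hcontra
  push_neg at hcontra
  have hcon : ∀ β ∈ posRoots Φ b, 1 ≤ |⟪β, μ⟫_ℝ| := by
    intro β hβ
    have := hcontra β hβ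
    rwa [hrw β] at this
  have hcon' : ∀ γ ∈ Φ, 1 ≤ |⟪γ, μ⟫_ℝ| := by
    intro γ hγ
    rcases Stmt7Aux.pos_or_neg_pos hΦ hb hγ with hp | hp
    · exact hcon γ hp
    · have := hcon _ hp
      rwa [inner_neg_left, abs_neg] at this
  -- choose u ∈ W with u μ dominant
  haveI : Finite ↥(weylGroup Φ) := Stmt7Aux.weyl_finite hΦ
  haveI : Nonempty ↥(weylGroup Φ) := ⟨1⟩
  obtain ⟨u₀, hu₀max⟩ :=
    Finite.exists_max (fun v : ↥(weylGroup Φ) => ⟪(v : E ≃ₗ[ℝ] E) μ, ρ⟫_ℝ)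
  set u : E ≃ₗ[ℝ] E := (u₀ : E ≃ₗ[ℝ] E) with hudef
  have huW : u ∈ weylGroup Φ := u₀.2
  have hdom : ∀ i, 0 ≤ ⟪b i, u μ⟫_ℝ := by
    intro i
    by_contra hneg
    push_neg at hneg
    have hbi0 : (b i : E) ≠ 0 := Stmt7Aux.root_ne_zero hΦ (hb.1 i)
    have hApos : 0 < ⟪b i, b i⟫_ℝ := Stmt7Aux.inner_self_pos' hbi0
    set v : ↥(weylGroup Φ) :=
      ⟨sEquiv (b i) * u, mul_mem (Stmt7Aux.sEquiv_mem_weyl (hb.1 i)) huW⟩ with hvdef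
    have hvapp : ((v : E ≃ₗ[ℝ] E)) μ = sRefl (b i) (u μ) := rfl
    have hcalc : ⟪sRefl (b i) (u μ), ρ⟫_ℝ
        = ⟪u μ, ρ⟫_ℝ - 2 * ⟪b i, u μ⟫_ℝ / ⟪b i, b i⟫_ℝ := by
      rw [sRefl, inner_sub_left, real_inner_smul_left, hbiρ i, mul_one]
    have hlt : ⟪(u₀ : E ≃ₗ[ℝ] E) μ, ρ⟫_ℝ < ⟪(v : E ≃ₗ[ℝ] E) μ, ρ⟫_ℝ := by
      rw [hvapp, hcalc]
      have hq : 2 * ⟪b i, u μ⟫_ℝ / ⟪b i, b i⟫_ℝ < 0 :=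
        div_neg_of_neg_of_pos (by linarith) hApos
      rw [← hudef]
      linarith
    exact absurd (hu₀max v) (not_le.mpr hlt)
  have hx1 : ∀ i, 1 ≤ ⟪b i, u μ⟫_ℝ := by
    intro i
    have hadj : ⟪b i, u μ⟫_ℝ = ⟪u.symm (b i), μ⟫_ℝ :=
      Stmt7Aux.w_adjoint' hΦ huW (b i) μ
    have hγΦ : u.symm (b i) ∈ Φ :=
      Stmt7Aux.w_maps hΦ (Stmt7Aux.w_symm_mem huW) (b i) (hb.1 i)
    have h := hcon' _ hγΦ
    rw [← hadj] at h
    rwa [abs_of_nonneg (hdom i)] at h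
  -- final contradiction via norms
  set x : E := u μ with hxdef
  set y : E := x - ρ with hydef
  have hxρ : x = ρ + y := by rw [hydef]; abel
  have hby : ∀ i, 0 ≤ ⟪b i, y⟫_ℝ := by
    intro i
    rw [hydef, inner_sub_right, hbiρ i]
    linarith [hx1 i]
  have hρy : 0 ≤ ⟪ρ, y⟫_ℝ := hρnonneg y hby
  have hyy : 0 ≤ ⟪y, y⟫_ℝ := real_inner_self_nonneg
  have hxx : ⟪x, x⟫_ℝ = ⟪μ, μ⟫_ℝ := Stmt7Aux.w_inner hΦ huW μ μ
  have hexp : ⟪x, x⟫_ℝ = ⟪ρ, ρ⟫_ℝ + 2 * ⟪ρ, y⟫_ℝ + ⟪y, y⟫_ℝ := by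
    rw [hxρ]
    exact real_inner_add_add_self ρ y
  linarith
end

section
/- Let n ≥ 1 and let Q ⊆ ℝ × ℝⁿ be a compact convex set. For λ ∈ ℝ let S_λ = {y ∈ ℝⁿ : (λ,y) ∈ Q} and f(λ) = Vol_n(S_λ)^{1/n}, where Vol_n is n-dimensional Lebesgue measure. Then f is concave on the (convex) set {λ ∈ ℝ : S_λ ≠ ∅}. -/
open MeasureTheory Set Pointwise
open scoped ENNReal NNReal

section BrunnMinkowski

lemma bm1_compact {K L : Set ℝ} (hK : IsCompact K) (hL : IsCompact L)
    (hKne : K.Nonempty) (hLne : L.Nonempty) :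
    volume K + volume L ≤ volume (K + L) := by
  set M := sSup K with hM
  set m := sInf L with hm
  have hMK : M ∈ K := hK.sSup_mem hKne
  have hmL : m ∈ L := hL.sInf_mem hLne
  set A : Set ℝ := (M + ·) '' L with hA
  set B : Set ℝ := (· + m) '' K with hB
  have hAc : IsCompact A := hL.image (continuous_const.add continuous_id)
  have hBc : IsCompact B := hK.image (continuous_id.add continuous_const)
  have hsub : A ∪ B ⊆ K + L := by
    rintro x (⟨y, hy, rfl⟩ | ⟨y, hy, rfl⟩)
    · exact add_mem_add hMK hy
    · exact add_mem_add hy hmL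
  have hint : A ∩ B ⊆ {M + m} := by
    rintro x ⟨⟨y, hy, rfl⟩, ⟨z, hz, hzx⟩⟩
    have h1 : z ≤ M := le_csSup hK.bddAbove hz
    have h2 : m ≤ y := csInf_le hL.bddBelow hy
    simp only [mem_singleton_iff]
    simp only at hzx
    linarith
  have hvolA : volume A = volume L := by
    rw [hA, show (M + ·) '' L = M +ᵥ L from rfl, measure_vadd]
  have hvolB : volume B = volume K := by
    rw [hB, show (· + m) '' K = m +ᵥ K from ?_, measure_vadd]
    ext x; simp only [Set.mem_image, Set.mem_vadd_set, vadd_eq_add]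
    constructor
    · rintro ⟨y, hy, rfl⟩; exact ⟨y, hy, by ring⟩
    · rintro ⟨y, hy, rfl⟩; exact ⟨y, hy, by ring⟩
  have key := measure_union_add_inter (μ := volume) A hBc.measurableSet
  have hint0 : volume (A ∩ B) = 0 :=
    le_antisymm (le_trans (measure_mono hint) (by simp)) zero_le
  calc volume K + volume L = volume (A ∪ B) + volume (A ∩ B) := by
        rw [key, hvolA, hvolB, add_comm]
      _ = volume (A ∪ B) := by rw [hint0, add_zero]
      _ ≤ volume (K + L) := measure_mono hsub

lemma bm1_meas {X Y : Set ℝ} (hX : MeasurableSet X) (hY : MeasurableSet Y)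
    (hXne : X.Nonempty) (hYne : Y.Nonempty) (hXf : volume X ≠ ⊤) (hYf : volume Y ≠ ⊤) :
    volume X + volume Y ≤ volume (X + Y) := by
  obtain ⟨x₀, hx₀⟩ := hXne
  obtain ⟨y₀, hy₀⟩ := hYne
  refine ENNReal.le_of_forall_pos_le_add fun ε hε _ => ?_
  have hε2 : (ε : ℝ≥0∞) / 2 ≠ 0 := by
    simp [ENNReal.div_eq_zero_iff, (by exact_mod_cast hε.ne' : (ε:ℝ≥0∞) ≠ 0)]
  obtain ⟨Kx, hKxX, hKxc, hKxv⟩ := hX.exists_isCompact_lt_add hXf hε2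
  obtain ⟨Ky, hKyY, hKyc, hKyv⟩ := hY.exists_isCompact_lt_add hYf hε2
  set Kx' := Kx ∪ {x₀} with hKx'
  set Ky' := Ky ∪ {y₀} with hKy'
  have hKx'c : IsCompact Kx' := hKxc.union isCompact_singleton
  have hKy'c : IsCompact Ky' := hKyc.union isCompact_singleton
  have h1 : volume X ≤ volume Kx' + ε / 2 :=
    le_trans hKxv.le (add_le_add_left (measure_mono subset_union_left) _)
  have h2 : volume Y ≤ volume Ky' + ε / 2 :=
    le_trans hKyv.le (add_le_add_left (measure_mono subset_union_left) _)
  have hsum : Kx' + Ky' ⊆ X + Y := by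
    apply Set.add_subset_add
    · exact union_subset hKxX (singleton_subset_iff.2 hx₀)
    · exact union_subset hKyY (singleton_subset_iff.2 hy₀)
  calc volume X + volume Y ≤ (volume Kx' + ε/2) + (volume Ky' + ε/2) := add_le_add h1 h2
    _ = (volume Kx' + volume Ky') + (ε/2 + ε/2) := by ring
    _ ≤ volume (Kx' + Ky') + ε := by
        rw [ENNReal.add_halves]
        exact add_le_add_left (bm1_compact hKx'c hKy'c
          ⟨x₀, subset_union_right rfl⟩ ⟨y₀, subset_union_right rfl⟩) _
    _ ≤ volume (X + Y) + ε := add_le_add_left (measure_mono hsum) _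

lemma vol_smul_real (a : ℝ) (X : Set ℝ) :
    volume (a • X) = ENNReal.ofReal |a| * volume X := by
  rw [Measure.addHaar_smul]
  simp

lemma bm1_scaled {X Y : Set ℝ} {a b : ℝ} (ha : 0 < a) (hb : 0 < b)
    (hX : MeasurableSet X) (hY : MeasurableSet Y)
    (hXne : X.Nonempty) (hYne : Y.Nonempty) (hXf : volume X ≠ ⊤) (hYf : volume Y ≠ ⊤) :
    ENNReal.ofReal a * volume X + ENNReal.ofReal b * volume Y ≤ volume (a • X + b • Y) := by
  have hXm : MeasurableSet (a • X) := hX.const_smul_of_ne_zero ha.ne'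
  have hYm : MeasurableSet (b • Y) := hY.const_smul_of_ne_zero hb.ne'
  have h1 : volume (a • X) = ENNReal.ofReal a * volume X := by
    rw [vol_smul_real, abs_of_pos ha]
  have h2 : volume (b • Y) = ENNReal.ofReal b * volume Y := by
    rw [vol_smul_real, abs_of_pos hb]
  have := bm1_meas hXm hYm (hXne.smul_set) (hYne.smul_set)
    (by rw [h1]; exact ENNReal.mul_ne_top ENNReal.ofReal_ne_top hXf)
    (by rw [h2]; exact ENNReal.mul_ne_top ENNReal.ofReal_ne_top hYf)
  rw [h1, h2] at this
  exact this

lemma pl_core {f g h : ℝ → ℝ} {a b : ℝ} (ha : 0 < a) (hb : 0 < b)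
    (hf : Measurable f) (hg : Measurable g) (hh : Measurable h)
    (hf0 : ∀ s, 0 ≤ f s) (hg0 : ∀ t, 0 ≤ g t) (hh0 : ∀ u, 0 ≤ h u)
    (hf1 : ∀ s, f s ≤ 1) (hg1 : ∀ t, g t ≤ 1)
    (hfne : ∀ r : ℝ, r < 1 → {s | r < f s}.Nonempty)
    (hgne : ∀ r : ℝ, r < 1 → {t | r < g t}.Nonempty)
    (hffin : volume {s | 0 < f s} ≠ ⊤) (hgfin : volume {t | 0 < g t} ≠ ⊤)
    (H : ∀ s t, min (f s) (g t) ≤ h (a * s + b * t)) :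
    ENNReal.ofReal a * (∫⁻ s, ENNReal.ofReal (f s)) +
      ENNReal.ofReal b * (∫⁻ t, ENNReal.ofReal (g t))
      ≤ ∫⁻ u, ENNReal.ofReal (h u) := by
  -- layer cake representations
  have lcf : (∫⁻ s, ENNReal.ofReal (f s)) = ∫⁻ r in Ioi (0:ℝ), volume {s | r < f s} :=
    lintegral_eq_lintegral_meas_lt volume (Filter.Eventually.of_forall hf0) hf.aemeasurable
  have lcg : (∫⁻ t, ENNReal.ofReal (g t)) = ∫⁻ r in Ioi (0:ℝ), volume {t | r < g t} :=
    lintegral_eq_lintegral_meas_lt volume (Filter.Eventually.of_forall hg0) hg.aemeasurable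
  have lch : (∫⁻ u, ENNReal.ofReal (h u)) = ∫⁻ r in Ioi (0:ℝ), volume {u | r < h u} :=
    lintegral_eq_lintegral_meas_lt volume (Filter.Eventually.of_forall hh0) hh.aemeasurable
  -- restrict f, g layer cakes to Ioo 0 1
  have restrictEq : ∀ (F : ℝ → ℝ), (∀ s, F s ≤ 1) →
      (∫⁻ r in Ioi (0:ℝ), volume {s | r < F s}) = ∫⁻ r in Ioo (0:ℝ) 1, volume {s | r < F s} := by
    intro F hF1
    rw [← Ioo_union_Ici_eq_Ioi (zero_lt_one), lintegral_union measurableSet_Ici]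
    · have : (∫⁻ r in Ici (1:ℝ), volume {s | r < F s}) = 0 := by
        rw [setLIntegral_congr_fun measurableSet_Ici
          (fun r hr => ?_), lintegral_zero]
        have : {s | r < F s} = ∅ := by
          ext s; simp only [mem_setOf_eq, mem_empty_iff_false, iff_false, not_lt]
          exact (hF1 s).trans hr
        rw [this, measure_empty]
      rw [this, add_zero]
    · exact Set.disjoint_left.2 fun r hr hr' => absurd hr.2 (not_lt.2 hr')
  rw [lcf, lcg, restrictEq f hf1, restrictEq g hg1, lch]
  -- pointwise comparison on Ioo 0 1
  have key : ∀ r ∈ Ioo (0:ℝ) 1,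
      ENNReal.ofReal a * volume {s | r < f s} + ENNReal.ofReal b * volume {t | r < g t}
        ≤ volume {u | r < h u} := by
    intro r hr
    have hXm : MeasurableSet {s | r < f s} := measurableSet_lt measurable_const hf
    have hYm : MeasurableSet {t | r < g t} := measurableSet_lt measurable_const hg
    have hXf : volume {s | r < f s} ≠ ⊤ := by
      refine ne_top_of_le_ne_top hffin (measure_mono fun s hs => ?_)
      exact lt_trans hr.1 hs
    have hYf : volume {t | r < g t} ≠ ⊤ := by
      refine ne_top_of_le_ne_top hgfin (measure_mono fun t ht => ?_)
      exact lt_trans hr.1 ht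
    refine le_trans (bm1_scaled ha hb hXm hYm (hfne r hr.2) (hgne r hr.2) hXf hYf)
      (measure_mono ?_)
    rintro u ⟨x, ⟨s, hs, rfl⟩, y, ⟨t, ht, rfl⟩, rfl⟩
    simp only [smul_eq_mul, mem_setOf_eq]
    exact lt_of_lt_of_le (lt_min hs ht) (H s t)
  -- measurability of level-volume functions
  have mf : Measurable fun r : ℝ => volume {s | r < f s} :=
    Antitone.measurable (fun r₁ r₂ h12 => measure_mono (fun s hs => lt_of_le_of_lt h12 hs))
  have mg : Measurable fun r : ℝ => volume {t | r < g t} :=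
    Antitone.measurable (fun r₁ r₂ h12 => measure_mono (fun t ht => lt_of_le_of_lt h12 ht))
  calc ENNReal.ofReal a * (∫⁻ r in Ioo (0:ℝ) 1, volume {s | r < f s}) +
        ENNReal.ofReal b * (∫⁻ r in Ioo (0:ℝ) 1, volume {t | r < g t})
      = ∫⁻ r in Ioo (0:ℝ) 1,
          (ENNReal.ofReal a * volume {s | r < f s} + ENNReal.ofReal b * volume {t | r < g t}) := by
        rw [lintegral_add_left (mf.const_mul _), lintegral_const_mul _ mf,
          lintegral_const_mul _ mg]
    _ ≤ ∫⁻ r in Ioo (0:ℝ) 1, volume {u | r < h u} := by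
        refine setLIntegral_mono (Antitone.measurable
          (fun r₁ r₂ h12 => measure_mono (fun u hu => lt_of_le_of_lt h12 hu))) key
    _ ≤ ∫⁻ r in Ioi (0:ℝ), volume {u | r < h u} :=
        lintegral_mono_set Ioo_subset_Ioi_self

variable {E : Type*} [NormedAddCommGroup E] [NormedSpace ℝ E]

-- slice of a set in ℝ × E
lemma slice_convex {A : Set (ℝ × E)} (hA : Convex ℝ A) (s : ℝ) :
    Convex ℝ {y : E | (s, y) ∈ A} := by
  intro y1 h1 y2 h2 p q hp hq hpq
  have h := hA h1 h2 hp hq hpq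
  simp only [Prod.smul_mk, Prod.mk_add_mk, smul_eq_mul] at h
  have hs : p * s + q * s = s := by rw [← add_mul, hpq, one_mul]
  simpa [hs] using h

lemma slice_compact {A : Set (ℝ × E)} (hA : IsCompact A) (s : ℝ) :
    IsCompact {y : E | (s, y) ∈ A} := by
  have hsub : {y : E | (s, y) ∈ A} ⊆ Prod.snd '' A := fun y hy => ⟨(s, y), hy, rfl⟩
  refine IsCompact.of_isClosed_subset (hA.image continuous_snd) ?_ hsub
  have : {y : E | (s, y) ∈ A} = (fun y => ((s : ℝ), y)) ⁻¹' A := rfl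
  rw [this]
  exact hA.isClosed.preimage (Continuous.prodMk_right s)

lemma slice_sum_subset {A B : Set (ℝ × E)} {a b s t : ℝ} :
    a • {y : E | (s, y) ∈ A} + b • {y : E | (t, y) ∈ B}
      ⊆ {y : E | (a * s + b * t, y) ∈ a • A + b • B} := by
  rintro x ⟨x1, ⟨y, hy, rfl⟩, x2, ⟨z, hz, rfl⟩, rfl⟩
  have : a • ((s:ℝ), y) + b • ((t:ℝ), z) ∈ a • A + b • B :=
    Set.add_mem_add (Set.smul_mem_smul_set hy) (Set.smul_mem_smul_set hz)
  simpa [Prod.smul_mk, Prod.mk_add_mk, smul_eq_mul] using this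

lemma ennreal_amgm {x y : ℝ≥0∞} (hx : x ≠ ⊤) (hy : y ≠ ⊤) {a b : ℝ}
    (ha : 0 ≤ a) (hb : 0 ≤ b) (hab : a + b = 1) :
    x ^ a * y ^ b ≤ ENNReal.ofReal a * x + ENNReal.ofReal b * y := by
  lift x to ℝ≥0 using hx
  lift y to ℝ≥0 using hy
  lift a to ℝ≥0 using ha
  lift b to ℝ≥0 using hb
  have hab' : a + b = 1 := by exact_mod_cast hab
  have := NNReal.geom_mean_le_arith_mean2_weighted a b x y hab'
  calc (x : ℝ≥0∞) ^ (a:ℝ) * (y:ℝ≥0∞) ^ (b:ℝ)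
      = ((x ^ (a:ℝ) * y ^ (b:ℝ) : ℝ≥0) : ℝ≥0∞) := by
        rw [ENNReal.coe_mul, ENNReal.coe_rpow_of_nonneg _ a.coe_nonneg,
          ENNReal.coe_rpow_of_nonneg _ b.coe_nonneg]
    _ ≤ ((a * x + b * y : ℝ≥0) : ℝ≥0∞) := by exact_mod_cast this
    _ = ENNReal.ofReal a * x + ENNReal.ofReal b * y := by
        simp [ENNReal.coe_add, ENNReal.coe_mul, ENNReal.ofReal_coe_nnreal]

-- volume of slices of a measurable set in ℝ × (Fin n → ℝ)
lemma slice_lintegral {n : ℕ} {A : Set (ℝ × (Fin n → ℝ))} (hA : MeasurableSet A) :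
    (∫⁻ s, volume {y : Fin n → ℝ | (s, y) ∈ A}) = volume A := by
  rw [Measure.volume_eq_prod, Measure.prod_apply hA]
  rfl

lemma slice_measurable {n : ℕ} {A : Set (ℝ × (Fin n → ℝ))} (hA : MeasurableSet A) :
    Measurable fun s => volume {y : Fin n → ℝ | (s, y) ∈ A} :=
  measurable_measure_prodMk_left hA

lemma bm_prod {n : ℕ}
    (IH : ∀ (A B : Set (Fin n → ℝ)), IsCompact A → IsCompact B → Convex ℝ A → Convex ℝ B →
      A.Nonempty → B.Nonempty → ∀ a b : ℝ, 0 < a → 0 < b → a + b = 1 →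
      volume A ^ a * volume B ^ b ≤ volume (a • A + b • B))
    (A B : Set (ℝ × (Fin n → ℝ))) (hAc : IsCompact A) (hBc : IsCompact B)
    (hAx : Convex ℝ A) (hBx : Convex ℝ B) (hAne : A.Nonempty) (hBne : B.Nonempty)
    {a b : ℝ} (ha : 0 < a) (hb : 0 < b) (hab : a + b = 1) :
    volume A ^ a * volume B ^ b ≤ volume (a • A + b • B) := by
  by_cases hA0 : volume A = 0
  · rw [hA0, ENNReal.zero_rpow_of_pos ha, zero_mul]; exact zero_le
  by_cases hB0 : volume B = 0
  · rw [hB0, ENNReal.zero_rpow_of_pos hb, mul_zero]; exact zero_le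
  set C := a • A + b • B with hC
  have hCc : IsCompact C := (hAc.smul a).add (hBc.smul b)
  set fE : ℝ → ℝ≥0∞ := fun s => volume {y : Fin n → ℝ | (s, y) ∈ A} with hfE
  set gE : ℝ → ℝ≥0∞ := fun t => volume {y : Fin n → ℝ | (t, y) ∈ B} with hgE
  set hE : ℝ → ℝ≥0∞ := fun u => volume {y : Fin n → ℝ | (u, y) ∈ C} with hhE
  have hfEm : Measurable fE := slice_measurable hAc.measurableSet
  have hgEm : Measurable gE := slice_measurable hBc.measurableSet
  have hhEm : Measurable hE := slice_measurable hCc.measurableSet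
  have hfInt : (∫⁻ s, fE s) = volume A := slice_lintegral hAc.measurableSet
  have hgInt : (∫⁻ t, gE t) = volume B := slice_lintegral hBc.measurableSet
  have hhInt : (∫⁻ u, hE u) = volume C := slice_lintegral hCc.measurableSet
  have hfbd : ∀ s, fE s ≤ volume (Prod.snd '' A) := fun s =>
    measure_mono fun y hy => ⟨(s, y), hy, rfl⟩
  have hgbd : ∀ t, gE t ≤ volume (Prod.snd '' B) := fun t =>
    measure_mono fun y hy => ⟨(t, y), hy, rfl⟩
  have hAsnd : volume (Prod.snd '' A) ≠ ⊤ := (hAc.image continuous_snd).measure_lt_top.ne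
  have hBsnd : volume (Prod.snd '' B) ≠ ⊤ := (hBc.image continuous_snd).measure_lt_top.ne
  have hfE_ne_top : ∀ s, fE s ≠ ⊤ := fun s => ne_top_of_le_ne_top hAsnd (hfbd s)
  have hgE_ne_top : ∀ t, gE t ≠ ⊤ := fun t => ne_top_of_le_ne_top hBsnd (hgbd t)
  have hhE_ne_top : ∀ u, hE u ≠ ⊤ := fun u =>
    ne_top_of_le_ne_top (hCc.image continuous_snd).measure_lt_top.ne
      (measure_mono fun y hy => ⟨(u, y), hy, rfl⟩)
  set MfE : ℝ≥0∞ := ⨆ s, fE s with hMfE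
  set MgE : ℝ≥0∞ := ⨆ t, gE t with hMgE
  have hMfTop : MfE ≠ ⊤ := ne_top_of_le_ne_top hAsnd (iSup_le hfbd)
  have hMgTop : MgE ≠ ⊤ := ne_top_of_le_ne_top hBsnd (iSup_le hgbd)
  have hMf0 : MfE ≠ 0 := by
    intro h0
    apply hA0
    rw [← hfInt]
    have hz : ∀ s, fE s = 0 := fun s => le_antisymm (h0 ▸ le_iSup fE s) zero_le
    simp [hz]
  have hMg0 : MgE ≠ 0 := by
    intro h0
    apply hB0
    rw [← hgInt]
    have hz : ∀ t, gE t = 0 := fun t => le_antisymm (h0 ▸ le_iSup gE t) zero_le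
    simp [hz]
  set MfR : ℝ := MfE.toReal with hMfR
  set MgR : ℝ := MgE.toReal with hMgR
  have hMfRpos : 0 < MfR := ENNReal.toReal_pos hMf0 hMfTop
  have hMgRpos : 0 < MgR := ENNReal.toReal_pos hMg0 hMgTop
  set MR : ℝ := MfR ^ a * MgR ^ b with hMR
  have hMRpos : 0 < MR := mul_pos (Real.rpow_pos_of_pos hMfRpos a) (Real.rpow_pos_of_pos hMgRpos b)
  set f : ℝ → ℝ := fun s => (fE s).toReal / MfR with hfdef
  set g : ℝ → ℝ := fun t => (gE t).toReal / MgR with hgdef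
  set h : ℝ → ℝ := fun u => (hE u).toReal / MR with hhdef
  have hf1 : ∀ s, f s ≤ 1 := fun s => by
    rw [hfdef, div_le_one hMfRpos]
    exact ENNReal.toReal_mono hMfTop (le_iSup fE s)
  have hg1 : ∀ t, g t ≤ 1 := fun t => by
    rw [hgdef, div_le_one hMgRpos]
    exact ENNReal.toReal_mono hMgTop (le_iSup gE t)
  have hf0 : ∀ s, 0 ≤ f s := fun s => div_nonneg ENNReal.toReal_nonneg hMfRpos.le
  have hg0 : ∀ t, 0 ≤ g t := fun t => div_nonneg ENNReal.toReal_nonneg hMgRpos.le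
  have hh0 : ∀ u, 0 ≤ h u := fun u => div_nonneg ENNReal.toReal_nonneg hMRpos.le
  -- level set nonemptiness
  have hfne : ∀ r : ℝ, r < 1 → {s | r < f s}.Nonempty := by
    intro r hr
    rcases lt_or_ge r 0 with hr0 | hr0
    · exact ⟨0, lt_of_lt_of_le hr0 (hf0 0)⟩
    · have h1 : ENNReal.ofReal (r * MfR) < MfE := by
        have : r * MfR < MfR := by nlinarith
        calc ENNReal.ofReal (r * MfR) < ENNReal.ofReal MfR :=
              (ENNReal.ofReal_lt_ofReal_iff hMfRpos).2 this
          _ = MfE := ENNReal.ofReal_toReal hMfTop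
      obtain ⟨s, hs⟩ := lt_iSup_iff.1 h1
      refine ⟨s, ?_⟩
      have h2 : r * MfR < (fE s).toReal := by
        have := (ENNReal.toReal_lt_toReal ENNReal.ofReal_ne_top (hfE_ne_top s)).2 hs
        rwa [ENNReal.toReal_ofReal (by positivity)] at this
      show r < f s
      rw [hfdef, lt_div_iff₀ hMfRpos]
      linarith
  have hgne : ∀ r : ℝ, r < 1 → {t | r < g t}.Nonempty := by
    intro r hr
    rcases lt_or_ge r 0 with hr0 | hr0
    · exact ⟨0, lt_of_lt_of_le hr0 (hg0 0)⟩
    · have h1 : ENNReal.ofReal (r * MgR) < MgE := by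
        have : r * MgR < MgR := by nlinarith
        calc ENNReal.ofReal (r * MgR) < ENNReal.ofReal MgR :=
              (ENNReal.ofReal_lt_ofReal_iff hMgRpos).2 this
          _ = MgE := ENNReal.ofReal_toReal hMgTop
      obtain ⟨t, ht⟩ := lt_iSup_iff.1 h1
      refine ⟨t, ?_⟩
      have h2 : r * MgR < (gE t).toReal := by
        have := (ENNReal.toReal_lt_toReal ENNReal.ofReal_ne_top (hgE_ne_top t)).2 ht
        rwa [ENNReal.toReal_ofReal (by positivity)] at this
      show r < g t
      rw [hgdef, lt_div_iff₀ hMgRpos]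
      linarith
  -- finiteness of positivity sets
  have hffin : volume {s | 0 < f s} ≠ ⊤ := by
    refine ne_top_of_le_ne_top (hAc.image continuous_fst).measure_lt_top.ne
      (measure_mono fun s hs => ?_)
    have : fE s ≠ 0 := by
      intro h0
      simp only [mem_setOf_eq, hfdef, h0, ENNReal.toReal_zero, zero_div, lt_self_iff_false] at hs
    obtain ⟨y, hy⟩ := nonempty_of_measure_ne_zero this
    exact ⟨(s, y), hy, rfl⟩
  have hgfin : volume {t | 0 < g t} ≠ ⊤ := by
    refine ne_top_of_le_ne_top (hBc.image continuous_fst).measure_lt_top.ne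
      (measure_mono fun t ht => ?_)
    have : gE t ≠ 0 := by
      intro h0
      simp only [mem_setOf_eq, hgdef, h0, ENNReal.toReal_zero, zero_div, lt_self_iff_false] at ht
    obtain ⟨y, hy⟩ := nonempty_of_measure_ne_zero this
    exact ⟨(t, y), hy, rfl⟩
  -- main hypothesis
  have H : ∀ s t, min (f s) (g t) ≤ h (a * s + b * t) := by
    intro s t
    by_cases hfs0 : fE s = 0
    · refine le_trans (min_le_left _ _) (le_trans ?_ (hh0 _))
      rw [hfdef]; simp [hfs0]
    by_cases hgt0 : gE t = 0
    · refine le_trans (min_le_right _ _) (le_trans ?_ (hh0 _))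
      rw [hgdef]; simp [hgt0]
    have hSAne : {y : Fin n → ℝ | (s, y) ∈ A}.Nonempty := nonempty_of_measure_ne_zero hfs0
    have hSBne : {y : Fin n → ℝ | (t, y) ∈ B}.Nonempty := nonempty_of_measure_ne_zero hgt0
    have step := IH _ _ (slice_compact hAc s) (slice_compact hBc t)
      (slice_convex hAx s) (slice_convex hBx t) hSAne hSBne a b ha hb hab
    have step2 : fE s ^ a * gE t ^ b ≤ hE (a * s + b * t) :=
      le_trans step (measure_mono slice_sum_subset)
    have hfsR : 0 < (fE s).toReal := ENNReal.toReal_pos hfs0 (hfE_ne_top s)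
    have hgtR : 0 < (gE t).toReal := ENNReal.toReal_pos hgt0 (hgE_ne_top t)
    have hminpos : 0 < min (f s) (g t) := by
      apply lt_min
      · rw [hfdef]; positivity
      · rw [hgdef]; positivity
    have step3 : (fE s).toReal ^ a * (gE t).toReal ^ b ≤ (hE (a * s + b * t)).toReal := by
      rw [ENNReal.toReal_rpow, ENNReal.toReal_rpow, ← ENNReal.toReal_mul]
      exact ENNReal.toReal_mono (hhE_ne_top _) step2
    have key : f s ^ a * g t ^ b ≤ h (a * s + b * t) := by
      show ((fE s).toReal / MfR) ^ a * ((gE t).toReal / MgR) ^ b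
        ≤ (hE (a * s + b * t)).toReal / MR
      rw [Real.div_rpow ENNReal.toReal_nonneg hMfRpos.le,
        Real.div_rpow ENNReal.toReal_nonneg hMgRpos.le, div_mul_div_comm]
      exact div_le_div_of_nonneg_right step3 (by positivity)
    refine le_trans ?_ key
    set m := min (f s) (g t) with hm
    calc m = m ^ (a + b) := by rw [hab, Real.rpow_one]
      _ = m ^ a * m ^ b := Real.rpow_add hminpos a b
      _ ≤ f s ^ a * g t ^ b := by
          apply mul_le_mul
          · exact Real.rpow_le_rpow hminpos.le (min_le_left _ _) ha.le
          · exact Real.rpow_le_rpow hminpos.le (min_le_right _ _) hb.le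
          · positivity
          · positivity
  -- apply the core lemma
  have core := pl_core ha hb
    ((hfEm.ennreal_toReal).div_const MfR) ((hgEm.ennreal_toReal).div_const MgR)
    ((hhEm.ennreal_toReal).div_const MR) hf0 hg0 hh0 hf1 hg1 hfne hgne hffin hgfin H
  -- convert lintegrals
  set cf : ℝ≥0∞ := ENNReal.ofReal MfR with hcf
  set cg : ℝ≥0∞ := ENNReal.ofReal MgR with hcg
  set cM : ℝ≥0∞ := ENNReal.ofReal MR with hcM
  have hcf0 : cf ≠ 0 := by simp [hcf, ENNReal.ofReal_eq_zero, not_le, hMfRpos]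
  have hcg0 : cg ≠ 0 := by simp [hcg, ENNReal.ofReal_eq_zero, not_le, hMgRpos]
  have hcM0 : cM ≠ 0 := by simp [hcM, ENNReal.ofReal_eq_zero, not_le, hMRpos]
  have hcfT : cf ≠ ⊤ := ENNReal.ofReal_ne_top
  have hcgT : cg ≠ ⊤ := ENNReal.ofReal_ne_top
  have hcMT : cM ≠ ⊤ := ENNReal.ofReal_ne_top
  have convf : (∫⁻ s, ENNReal.ofReal (f s)) = volume A * cf⁻¹ := by
    have : ∀ s, ENNReal.ofReal (f s) = fE s * cf⁻¹ := by
      intro s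
      rw [hfdef]
      show ENNReal.ofReal ((fE s).toReal / MfR) = fE s * cf⁻¹
      rw [ENNReal.ofReal_div_of_pos hMfRpos, ENNReal.ofReal_toReal (hfE_ne_top s),
        div_eq_mul_inv]
    simp_rw [this]
    rw [lintegral_mul_const _ hfEm, hfInt]
  have convg : (∫⁻ t, ENNReal.ofReal (g t)) = volume B * cg⁻¹ := by
    have : ∀ t, ENNReal.ofReal (g t) = gE t * cg⁻¹ := by
      intro t
      rw [hgdef]
      show ENNReal.ofReal ((gE t).toReal / MgR) = gE t * cg⁻¹
      rw [ENNReal.ofReal_div_of_pos hMgRpos, ENNReal.ofReal_toReal (hgE_ne_top t),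
        div_eq_mul_inv]
    simp_rw [this]
    rw [lintegral_mul_const _ hgEm, hgInt]
  have convh : (∫⁻ u, ENNReal.ofReal (h u)) = volume C * cM⁻¹ := by
    have : ∀ u, ENNReal.ofReal (h u) = hE u * cM⁻¹ := by
      intro u
      rw [hhdef]
      show ENNReal.ofReal ((hE u).toReal / MR) = hE u * cM⁻¹
      rw [ENNReal.ofReal_div_of_pos hMRpos, ENNReal.ofReal_toReal (hhE_ne_top u),
        div_eq_mul_inv]
    simp_rw [this]
    rw [lintegral_mul_const _ hhEm, hhInt]
  rw [convf, convg, convh] at core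
  -- final algebra
  set u : ℝ≥0∞ := volume A * cf⁻¹ with hu
  set v : ℝ≥0∞ := volume B * cg⁻¹ with hv
  have hAT : volume A ≠ ⊤ := hAc.measure_lt_top.ne
  have hBT : volume B ≠ ⊤ := hBc.measure_lt_top.ne
  have huT : u ≠ ⊤ := ENNReal.mul_ne_top hAT (by simp [hcfT, ENNReal.inv_ne_top, hcf0])
  have hvT : v ≠ ⊤ := ENNReal.mul_ne_top hBT (by simp [hcgT, ENNReal.inv_ne_top, hcg0])
  have amgm := ennreal_amgm huT hvT ha.le hb.le hab
  have main : u ^ a * v ^ b ≤ volume C * cM⁻¹ := le_trans amgm core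
  have hcMsplit : cM = cf ^ a * cg ^ b := by
    rw [hcM, hMR, ENNReal.ofReal_mul (Real.rpow_nonneg hMfRpos.le a),
      ENNReal.ofReal_rpow_of_pos hMfRpos, ENNReal.ofReal_rpow_of_pos hMgRpos]
  have hvolA : volume A = u * cf := by
    rw [hu, mul_assoc, ENNReal.inv_mul_cancel hcf0 hcfT, mul_one]
  have hvolB : volume B = v * cg := by
    rw [hv, mul_assoc, ENNReal.inv_mul_cancel hcg0 hcgT, mul_one]
  calc volume A ^ a * volume B ^ b
      = (u * cf) ^ a * (v * cg) ^ b := by rw [← hvolA, ← hvolB]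
    _ = (u ^ a * cf ^ a) * (v ^ b * cg ^ b) := by
        rw [ENNReal.mul_rpow_of_ne_top huT hcfT, ENNReal.mul_rpow_of_ne_top hvT hcgT]
    _ = (u ^ a * v ^ b) * cM := by rw [hcMsplit]; ring
    _ ≤ (volume C * cM⁻¹) * cM := mul_le_mul_left main cM
    _ = volume C := by rw [mul_assoc, ENNReal.inv_mul_cancel hcM0 hcMT, mul_one]

noncomputable def eqv (n : ℕ) : (Fin (n+1) → ℝ) ≃ₗ[ℝ] ℝ × (Fin n → ℝ) where
  toFun x := (x 0, fun j => x j.succ)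
  invFun p := Fin.cons p.1 p.2
  map_add' x y := rfl
  map_smul' c x := rfl
  left_inv x := Fin.cons_self_tail x
  right_inv p := by ext <;> simp [Fin.cons_zero, Fin.cons_succ]

lemma bm_mult : ∀ (n : ℕ) (A B : Set (Fin n → ℝ)), IsCompact A → IsCompact B →
    Convex ℝ A → Convex ℝ B → A.Nonempty → B.Nonempty →
    ∀ a b : ℝ, 0 < a → 0 < b → a + b = 1 →
    volume A ^ a * volume B ^ b ≤ volume (a • A + b • B) := by
  intro n
  induction n with
  | zero =>
    intro A B _ _ _ _ hAne hBne a b ha hb hab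
    obtain ⟨x, hx⟩ := hAne
    obtain ⟨y, hy⟩ := hBne
    have hAu : A = univ := eq_univ_of_forall fun z => by rwa [Subsingleton.elim z x]
    have hCu : a • A + b • B = univ := by
      refine eq_univ_of_forall fun z => ?_
      have : a • x + b • y ∈ a • A + b • B :=
        add_mem_add (smul_mem_smul_set hx) (smul_mem_smul_set hy)
      rwa [Subsingleton.elim z (a • x + b • y)]
    have hBu : B = univ := eq_univ_of_forall fun z => by rwa [Subsingleton.elim z y]
    have hvol : volume (univ : Set (Fin 0 → ℝ)) = 1 := by
      simp [MeasureTheory.volume_pi, Measure.pi_univ]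
    rw [hAu, hBu] at hCu ⊢
    rw [hCu, hvol, ENNReal.one_rpow, ENNReal.one_rpow, one_mul]
  | succ n IH =>
    intro A B hAc hBc hAx hBx hAne hBne a b ha hb hab
    set L := eqv n with hL
    have hLcont : Continuous L := LinearMap.continuous_of_finiteDimensional L.toLinearMap
    set me := MeasurableEquiv.piFinSuccAbove (fun _ : Fin (n+1) => ℝ) 0 with hme
    have hmp := volume_preserving_piFinSuccAbove (fun _ : Fin (n+1) => ℝ) 0
    have hcoe : ⇑me = ⇑L := by
      funext x
      have ht : Fin.tail x = fun j : Fin n => x j.succ := rfl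
      simp only [hme, MeasurableEquiv.piFinSuccAbove_apply, Fin.removeNth, Fin.zero_succAbove]
      rfl
    have himg : ∀ S : Set (Fin (n+1) → ℝ), MeasurableSet S → volume (L '' S) = volume S := by
      intro S hS
      rw [← hcoe, MeasurableEquiv.image_eq_preimage_symm]
      exact (hmp.symm me).measure_preimage hS.nullMeasurableSet
    have hsm : ∀ (c : ℝ) (S : Set (Fin (n+1) → ℝ)), L '' (c • S) = c • (L '' S) := by
      intro c S
      have := image_smul_set L.toLinearMap c S
      simpa using this
    have key := bm_prod IH (L '' A) (L '' B) (hAc.image hLcont) (hBc.image hLcont)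
      (hAx.linear_image L.toLinearMap) (hBx.linear_image L.toLinearMap)
      (hAne.image L) (hBne.image L) ha hb hab
    have hsum : a • (L '' A) + b • (L '' B) = L '' (a • A + b • B) := by
      rw [Set.image_add, hsm, hsm]
    rw [himg A hAc.measurableSet, himg B hBc.measurableSet, hsum,
      himg _ ((hAc.smul a).add (hBc.smul b)).measurableSet] at key
    exact key

lemma vol_smul_fin {n : ℕ} (c : ℝ) (S : Set (Fin n → ℝ)) :
    volume (c • S) = ENNReal.ofReal (|c| ^ n) * volume S := by
  rw [Measure.addHaar_smul, Module.finrank_fin_fun, abs_pow]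

lemma bm_add {n : ℕ} (hn : 1 ≤ n) {A B : Set (Fin n → ℝ)} (hAc : IsCompact A)
    (hBc : IsCompact B) (hAx : Convex ℝ A) (hBx : Convex ℝ B)
    (hAne : A.Nonempty) (hBne : B.Nonempty)
    {a b : ℝ} (ha : 0 < a) (hb : 0 < b) (hab : a + b = 1) :
    a * (volume A).toReal ^ (1/(n:ℝ)) + b * (volume B).toReal ^ (1/(n:ℝ))
      ≤ (volume (a • A + b • B)).toReal ^ (1/(n:ℝ)) := by
  have hn0 : (n : ℝ) ≠ 0 := Nat.cast_ne_zero.2 (by omega)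
  have hCT : volume (a • A + b • B) ≠ ⊤ := ((hAc.smul a).add (hBc.smul b)).measure_lt_top.ne
  have hAT : volume A ≠ ⊤ := hAc.measure_lt_top.ne
  have hBT : volume B ≠ ⊤ := hBc.measure_lt_top.ne
  have pow_cancel : ∀ c : ℝ, 0 ≤ c → (c ^ n) ^ (1/(n:ℝ)) = c := by
    intro c hc
    rw [← Real.rpow_natCast c n, ← Real.rpow_mul hc, mul_one_div, div_self hn0, Real.rpow_one]
  -- helper to bound from below using just one of the two sets
  have onesided : ∀ (c : ℝ) (S : Set (Fin n → ℝ)) (v : Fin n → ℝ), 0 < c → IsCompact S →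
      (v +ᵥ (c • S) ⊆ a • A + b • B) →
      c * (volume S).toReal ^ (1/(n:ℝ)) ≤ (volume (a • A + b • B)).toReal ^ (1/(n:ℝ)) := by
    intro c S v hc hSc hsub
    have h1 : volume (v +ᵥ (c • S)) = ENNReal.ofReal (c ^ n) * volume S := by
      rw [measure_vadd, vol_smul_fin, abs_of_pos hc]
    have h2 : ENNReal.ofReal (c ^ n) * volume S ≤ volume (a • A + b • B) := by
      rw [← h1]; exact measure_mono hsub
    have h3 : c ^ n * (volume S).toReal ≤ (volume (a • A + b • B)).toReal := by
      have := ENNReal.toReal_mono hCT h2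
      rwa [ENNReal.toReal_mul, ENNReal.toReal_ofReal (by positivity)] at this
    calc c * (volume S).toReal ^ (1/(n:ℝ))
        = (c ^ n * (volume S).toReal) ^ (1/(n:ℝ)) := by
          rw [Real.mul_rpow (by positivity) ENNReal.toReal_nonneg, pow_cancel c hc.le]
      _ ≤ (volume (a • A + b • B)).toReal ^ (1/(n:ℝ)) :=
          Real.rpow_le_rpow (by positivity) h3 (by positivity)
  by_cases hA0 : volume A = 0
  · obtain ⟨x₀, hx₀⟩ := hAne
    rw [hA0, ENNReal.toReal_zero, Real.zero_rpow (by positivity), mul_zero, zero_add]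
    refine onesided b B (a • x₀) hb hBc ?_
    rintro z ⟨w, hw, rfl⟩
    exact add_mem_add (smul_mem_smul_set hx₀) hw
  by_cases hB0 : volume B = 0
  · obtain ⟨y₀, hy₀⟩ := hBne
    rw [hB0, ENNReal.toReal_zero, Real.zero_rpow (by positivity), mul_zero, add_zero]
    refine onesided a A (b • y₀) ha hAc ?_
    rintro z ⟨w, hw, rfl⟩
    show (b • y₀) +ᵥ w ∈ a • A + b • B
    rw [vadd_eq_add, add_comm (b • y₀) w]
    exact add_mem_add hw (smul_mem_smul_set hy₀)
  -- main case
  set VA := (volume A).toReal with hVA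
  set VB := (volume B).toReal with hVB
  have hVApos : 0 < VA := ENNReal.toReal_pos hA0 hAT
  have hVBpos : 0 < VB := ENNReal.toReal_pos hB0 hBT
  set rA := VA ^ (1/(n:ℝ)) with hrA
  set rB := VB ^ (1/(n:ℝ)) with hrB
  have hrApos : 0 < rA := Real.rpow_pos_of_pos hVApos _
  have hrBpos : 0 < rB := Real.rpow_pos_of_pos hVBpos _
  set d := a * rA + b * rB with hd
  have hdpos : 0 < d := by positivity
  set A' := rA⁻¹ • A with hA'
  set B' := rB⁻¹ • B with hB'
  have hrAn : rA ^ n = VA := by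
    rw [hrA, ← Real.rpow_natCast (VA ^ (1/(n:ℝ))) n, ← Real.rpow_mul hVApos.le,
      one_div, inv_mul_cancel₀ hn0, Real.rpow_one]
  have hrBn : rB ^ n = VB := by
    rw [hrB, ← Real.rpow_natCast (VB ^ (1/(n:ℝ))) n, ← Real.rpow_mul hVBpos.le,
      one_div, inv_mul_cancel₀ hn0, Real.rpow_one]
  have hvolA' : volume A' = 1 := by
    rw [hA', vol_smul_fin, abs_of_pos (inv_pos.2 hrApos), inv_pow, hrAn,
      ← ENNReal.ofReal_toReal hAT, ← hVA, ← ENNReal.ofReal_mul (by positivity),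
      inv_mul_cancel₀ hVApos.ne', ENNReal.ofReal_one]
  have hvolB' : volume B' = 1 := by
    rw [hB', vol_smul_fin, abs_of_pos (inv_pos.2 hrBpos), inv_pow, hrBn,
      ← ENNReal.ofReal_toReal hBT, ← hVB, ← ENNReal.ofReal_mul (by positivity),
      inv_mul_cancel₀ hVBpos.ne', ENNReal.ofReal_one]
  have key := bm_mult n A' B' (hAc.smul _) (hBc.smul _) (hAx.smul _) (hBx.smul _)
    hAne.smul_set hBne.smul_set (a*rA/d) (b*rB/d) (by positivity) (by positivity)
    (by rw [← add_div, div_eq_one_iff_eq hdpos.ne'])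
  have hcomb : (a*rA/d) • A' + (b*rB/d) • B' = d⁻¹ • (a • A + b • B) := by
    rw [hA', hB', smul_smul, smul_smul, smul_add, smul_smul, smul_smul]
    congr 2
    · field_simp
    · field_simp
  rw [hvolA', hvolB', ENNReal.one_rpow, ENNReal.one_rpow, one_mul, hcomb] at key
  have hvolC : volume (d⁻¹ • (a • A + b • B))
      = ENNReal.ofReal ((d ^ n)⁻¹) * volume (a • A + b • B) := by
    rw [vol_smul_fin, abs_of_pos (inv_pos.2 hdpos), inv_pow]
  rw [hvolC] at key
  have hdn : ENNReal.ofReal (d ^ n) ≤ volume (a • A + b • B) := by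
    calc ENNReal.ofReal (d ^ n) = ENNReal.ofReal (d ^ n) * 1 := (mul_one _).symm
      _ ≤ ENNReal.ofReal (d ^ n) * (ENNReal.ofReal ((d ^ n)⁻¹) * volume (a • A + b • B)) :=
          mul_le_mul_right key _
      _ = (ENNReal.ofReal (d ^ n) * ENNReal.ofReal ((d ^ n)⁻¹)) * volume (a • A + b • B) := by
          ring
      _ = volume (a • A + b • B) := by
          rw [← ENNReal.ofReal_mul (by positivity), mul_inv_cancel₀ (by positivity),
            ENNReal.ofReal_one, one_mul]
  have hdn' : d ^ n ≤ (volume (a • A + b • B)).toReal := by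
    have := ENNReal.toReal_mono hCT hdn
    rwa [ENNReal.toReal_ofReal (by positivity)] at this
  calc a * rA + b * rB = d := rfl
    _ = (d ^ n) ^ (1/(n:ℝ)) := (pow_cancel d hdpos.le).symm
    _ ≤ (volume (a • A + b • B)).toReal ^ (1/(n:ℝ)) :=
        Real.rpow_le_rpow (by positivity) hdn' (by positivity)
end BrunnMinkowski

/-- Let `n ≥ 1` and let `Q ⊆ ℝ × ℝⁿ` be a compact convex set.  For
`λ ∈ ℝ` let `S_λ = {y : (λ,y) ∈ Q}` and `f(λ) = Vol_n(S_λ)^{1/n}`.  Then `f` is concave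
on the set `{λ : S_λ ≠ ∅}`. -/
theorem stmt8 (n : ℕ) (hn : 1 ≤ n) (Q : Set (ℝ × (Fin n → ℝ)))
    (hQcompact : IsCompact Q) (hQconvex : Convex ℝ Q) :
    ConcaveOn ℝ {l : ℝ | {y : Fin n → ℝ | (l, y) ∈ Q}.Nonempty}
      (fun l : ℝ => (volume {y : Fin n → ℝ | (l, y) ∈ Q}).toReal ^ (1 / (n : ℝ))) := by
  constructor
  · have hset : {l : ℝ | {y : Fin n → ℝ | (l, y) ∈ Q}.Nonempty} = Prod.fst '' Q := by
      ext l
      constructor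
      · rintro ⟨y, hy⟩; exact ⟨(l, y), hy, rfl⟩
      · rintro ⟨⟨l', y⟩, hy, rfl⟩; exact ⟨y, hy⟩
    rw [hset]
    exact hQconvex.linear_image (LinearMap.fst ℝ ℝ _)
  · intro x hx y hy a b ha hb hab
    simp only [smul_eq_mul]
    rcases eq_or_lt_of_le ha with rfl | ha'
    · simp only [zero_add] at hab
      subst hab
      simp
    rcases eq_or_lt_of_le hb with rfl | hb'
    · simp only [add_zero] at hab
      subst hab
      simp
    -- main case
    have hQQ : a • Q + b • Q = Q := by
      rw [← Convex.add_smul hQconvex ha hb, hab, one_smul]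
    have hsub : a • {z : Fin n → ℝ | (x, z) ∈ Q} + b • {z : Fin n → ℝ | (y, z) ∈ Q}
        ⊆ {z : Fin n → ℝ | (a * x + b * y, z) ∈ Q} := by
      refine subset_trans slice_sum_subset ?_
      intro z hz
      show (a * x + b * y, z) ∈ Q
      rw [← hQQ]
      exact hz
    have h1 := bm_add hn (slice_compact hQcompact x) (slice_compact hQcompact y)
      (slice_convex hQconvex x) (slice_convex hQconvex y) hx hy ha' hb' hab
    refine le_trans h1 ?_
    apply Real.rpow_le_rpow ENNReal.toReal_nonneg _ (by positivity)
    exact ENNReal.toReal_mono (slice_compact hQcompact (a * x + b * y)).measure_lt_top.ne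
      (measure_mono hsub)
end
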